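/- arXiv:2407.11797 — 4 statements merged into one kernel-verified Lean document; each statement's English description precedes it below -/
import Mathlib

section
/- Let K be a scattering kernel. Then for any n, ω ∈ S² there exist finitely many points n₁, …, n_N ∈ S² such that, setting n₀ = n and n_{N+1} = ω, one has K(n_{i−1}, n_i) > 0 for every i ∈ {1, …, N+1}. -/
open MeasureTheory Metric

noncomputable section

/-- The ambient Euclidean space `ℝ³`. -/
abbrev E3 : Type := EuclideanSpace ℝ (Fin 3)

/-- The unit sphere `S² ⊂ ℝ³`. -/
abbrev S2 : Type := Metric.sphere (0 : E3) 1

/-- The surface measure on the unit sphere `S²` (with total mass `4π`). -/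
def μS : Measure S2 := (volume : Measure E3).toSphere

/-- A rotation of `ℝ³`: an orthogonal (i.e. norm preserving linear) transformation with
determinant `1`, i.e. an element of `SO(3)`. -/
def IsRotation (R : E3 ≃ₗᵢ[ℝ] E3) : Prop :=
  LinearMap.det (R.toLinearEquiv : E3 →ₗ[ℝ] E3) = 1

/-- The action of an orthogonal transformation on the unit sphere. -/
def rotate (R : E3 ≃ₗᵢ[ℝ] E3) (n : S2) : S2 :=
  ⟨R n, by
    have hn : ‖(n : E3)‖ = 1 := mem_sphere_zero_iff_norm.mp n.2
    simp [mem_sphere_zero_iff_norm, hn]⟩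

/-- A scattering kernel: a continuous, non-negative, rotation invariant function
`K : S² × S² → ℝ` with `∫_{S²} K(n,n') dn = 1` for every `n'`. -/
structure IsScatteringKernel (K : S2 → S2 → ℝ) : Prop where
  continuous : Continuous (Function.uncurry K)
  nonneg : ∀ n n' : S2, 0 ≤ K n n'
  normalized : ∀ n' : S2, ∫ n : S2, K n n' ∂μS = 1
  rotation_invariant : ∀ R : E3 ≃ₗᵢ[ℝ] E3, IsRotation R →
    ∀ n n' : S2, K (rotate R n) (rotate R n') = K n n'




open Module in
open scoped RealInnerProductSpace in
lemma isRotation_reflection_span (u : E3) (hu : u ≠ 0) :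
    IsRotation (Submodule.reflection (ℝ ∙ u)) := by
  have h1 : finrank ℝ (ℝ ∙ u) = 1 := finrank_span_singleton hu
  have h2 : finrank ℝ (ℝ ∙ u) + finrank ℝ (ℝ ∙ u)ᗮ = finrank ℝ E3 :=
    Submodule.finrank_add_finrank_orthogonal _
  have h3 : finrank ℝ E3 = 3 := finrank_euclideanSpace_fin
  have h4 : finrank ℝ (ℝ ∙ u)ᗮ = 2 := by omega
  have h5 := Submodule.det_reflection (𝕜 := ℝ) (ℝ ∙ u)
  rw [h4] at h5
  unfold IsRotation
  simpa using h5

open Module in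
open scoped RealInnerProductSpace in
lemma swap_rotation {m n : E3} (hm : ‖m‖ = 1) (hn : ‖n‖ = 1) :
    ∃ R : E3 ≃ₗᵢ[ℝ] E3, IsRotation R ∧ R m = n ∧ R n = m := by
  by_cases h : m + n = 0
  · -- n = -m; reflect in a line orthogonal to m
    have hmn : n = -m := by linear_combination (norm := module) h
    have hne : (ℝ ∙ m)ᗮ ≠ ⊥ := by
      intro hbot
      have h1 : finrank ℝ (ℝ ∙ m) = 1 :=
        finrank_span_singleton (by intro h0; rw [h0] at hm; simp at hm)
      have h2 : finrank ℝ (ℝ ∙ m) + finrank ℝ (ℝ ∙ m)ᗮ = finrank ℝ E3 :=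
        Submodule.finrank_add_finrank_orthogonal _
      have h3 : finrank ℝ E3 = 3 := finrank_euclideanSpace_fin
      rw [hbot] at h2
      simp [h1, h3] at h2
    obtain ⟨u, huo, hu0⟩ := Submodule.exists_mem_ne_zero_of_ne_bot hne
    have hum : ⟪u, m⟫ = 0 := by
      rw [real_inner_comm]
      exact (Submodule.mem_orthogonal _ u).mp huo m (Submodule.mem_span_singleton_self m)
    refine ⟨Submodule.reflection (ℝ ∙ u), isRotation_reflection_span u hu0, ?_, ?_⟩
    · rw [Submodule.reflection_apply, Submodule.starProjection_singleton, hum]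
      simp [hmn]
    · rw [hmn, map_neg, Submodule.reflection_apply, Submodule.starProjection_singleton, hum]
      simp
  · set u := m + n with hu
    have hnu : ‖u‖ ^ 2 = 2 + 2 * ⟪m, n⟫ := by
      rw [hu, norm_add_sq_real, hm, hn]; ring
    have hpos : (0:ℝ) < ‖u‖ ^ 2 := pow_pos (norm_pos_iff.mpr h) 2
    refine ⟨Submodule.reflection (ℝ ∙ u), isRotation_reflection_span u h, ?_, ?_⟩
    · rw [Submodule.reflection_apply, Submodule.starProjection_singleton]
      have hum : ⟪u, m⟫ = 1 + ⟪m, n⟫ := by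
        rw [hu, inner_add_left, real_inner_self_eq_norm_sq, hm, real_inner_comm n m]; ring
      have h1t : (1:ℝ) + ⟪m, n⟫ ≠ 0 := by
        have : (0:ℝ) < 2 + 2 * ⟪m, n⟫ := hnu ▸ hpos
        intro hc; nlinarith
      have hc : (1 + ⟪m, n⟫) / (2 + 2 * ⟪m, n⟫) = 1/2 := by
        rw [show (2:ℝ) + 2 * ⟪m, n⟫ = 2 * (1 + ⟪m, n⟫) by ring]
        rw [div_mul_eq_div_div_swap, div_self h1t]
      rw [hum, hnu]
      simp only [RCLike.ofReal_real_eq_id, id_eq]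
      rw [hc, hu]
      module
    · rw [Submodule.reflection_apply, Submodule.starProjection_singleton]
      have hum : ⟪u, n⟫ = 1 + ⟪m, n⟫ := by
        rw [hu, inner_add_left, real_inner_self_eq_norm_sq, hn]; ring
      have h1t : (1:ℝ) + ⟪m, n⟫ ≠ 0 := by
        have : (0:ℝ) < 2 + 2 * ⟪m, n⟫ := hnu ▸ hpos
        intro hc; nlinarith
      have hc : (1 + ⟪m, n⟫) / (2 + 2 * ⟪m, n⟫) = 1/2 := by
        rw [show (2:ℝ) + 2 * ⟪m, n⟫ = 2 * (1 + ⟪m, n⟫) by ring, div_mul_eq_div_div_swap,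
          div_self h1t]
      rw [hum, hnu]
      simp only [RCLike.ofReal_real_eq_id, id_eq]
      rw [hc, hu]
      module

open Module in
instance : PreconnectedSpace S2 := by
  have h : 1 < Module.rank ℝ E3 := by
    rw [← Module.finrank_eq_rank ℝ E3, finrank_euclideanSpace_fin]
    exact_mod_cast (by norm_num : (1:ℕ) < 3)
  exact Subtype.preconnectedSpace (isPreconnected_sphere h 0 1)


/-- For a scattering kernel `K` and any `n, ω ∈ S²` there exist finitely many points
`n₁, …, n_N ∈ S²` such that, setting `n₀ = n` and `n_{N+1} = ω`, one has
`K(n_{i−1}, n_i) > 0` for every `i ∈ {1, …, N+1}`. -/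
theorem scatteringKernel_chain_pos (K : S2 → S2 → ℝ) (hK : IsScatteringKernel K) (n ω : S2) :
    ∃ (N : ℕ) (f : ℕ → S2), f 0 = n ∧ f (N + 1) = ω ∧
      ∀ i : ℕ, 1 ≤ i → i ≤ N + 1 → 0 < K (f (i - 1)) (f i) := by
  -- symmetry of K
  have Ksymm : ∀ a b : S2, K a b = K b a := by
    intro a b
    obtain ⟨R, hR, hab, hba⟩ :=
      swap_rotation (mem_sphere_zero_iff_norm.mp a.2) (mem_sphere_zero_iff_norm.mp b.2)
    have h := hK.rotation_invariant R hR a b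
    have e1 : rotate R a = b := Subtype.ext hab
    have e2 : rotate R b = a := Subtype.ext hba
    rw [e1, e2] at h
    exact h.symm
  -- positivity from normalization
  have hex : ∀ x : S2, ∃ m : S2, 0 < K m x := by
    intro x
    by_contra hc
    push_neg at hc
    have hz : (fun m : S2 => K m x) = fun _ => 0 :=
      funext fun m => le_antisymm (hc m) (hK.nonneg m x)
    have := hK.normalized x
    rw [hz] at this
    simp at this
  have contR : ∀ a : S2, Continuous (fun y : S2 => K a y) := fun a =>
    hK.continuous.comp (Continuous.prodMk_right a)
  -- the reachable set
  set S : Set S2 := {x | ∃ (N : ℕ) (f : ℕ → S2), f 0 = n ∧ f (N + 1) = x ∧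
      ∀ i : ℕ, 1 ≤ i → i ≤ N + 1 → 0 < K (f (i - 1)) (f i)} with hS
  suffices hωS : ω ∈ S by exact hωS
  have hopen : IsOpen S := by
    rw [isOpen_iff_mem_nhds]
    rintro x ⟨N, f, hf0, hfN, hstep⟩
    have hlast : 0 < K (f N) x := by
      have := hstep (N + 1) (Nat.le_add_left 1 N) le_rfl
      simpa [hfN] using this
    have hU : IsOpen {y : S2 | 0 < K (f N) y} := isOpen_lt continuous_const (contR (f N))
    refine Filter.mem_of_superset (hU.mem_nhds hlast) ?_
    intro y hy
    refine ⟨N, Function.update f (N + 1) y, ?_, ?_, ?_⟩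
    · rw [Function.update_of_ne (by omega) _ _]; exact hf0
    · exact Function.update_self _ _ _
    · intro i h1 h2
      rcases eq_or_lt_of_le h2 with he | hlt
      · subst he
        rw [show N + 1 - 1 = N by omega, Function.update_of_ne (by omega),
          Function.update_self]
        exact hy
      · have hi : i ≤ N := by omega
        rw [Function.update_of_ne (by omega), Function.update_of_ne (by omega)]
        exact hstep i h1 (by omega)
  have hclosed : IsClosed S := by
    rw [← isOpen_compl_iff, isOpen_iff_mem_nhds]
    intro x hx
    obtain ⟨m, hm⟩ := hex x
    have hU : IsOpen {y : S2 | 0 < K m y} := isOpen_lt continuous_const (contR m)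
    refine Filter.mem_of_superset (hU.mem_nhds hm) ?_
    intro y hy hyS
    apply hx
    obtain ⟨N, f, hf0, hfN, hstep⟩ := hyS
    refine ⟨N + 2, fun i => if h : i ≤ N + 1 then f i else if i = N + 2 then m else x,
      ?_, ?_, ?_⟩
    · simp [hf0]
    · simp [show ¬ (N + 2 + 1 ≤ N + 1) by omega, show N + 2 + 1 ≠ N + 2 by omega]
    · intro i h1 h2
      rcases le_or_gt i (N + 1) with hle | hgt
      · have : i - 1 ≤ N + 1 := by omega
        simp only [dif_pos hle, dif_pos this]
        exact hstep i h1 hle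
      · rcases eq_or_lt_of_le (show i ≤ N + 3 by omega) with he | hlt
        · subst he
          simp only [show ¬ (N + 3 ≤ N + 1) by omega, show N + 3 - 1 = N + 2 by omega,
            show ¬ (N + 2 ≤ N + 1) by omega, dif_neg, if_pos rfl,
            show N + 3 ≠ N + 2 by omega, if_neg, not_false_iff]
          exact hm
        · have hi : i = N + 2 := by omega
          subst hi
          simp only [show N + 2 - 1 = N + 1 by omega, dif_pos (le_refl (N + 1)),
            show ¬ (N + 2 ≤ N + 1) by omega, dif_neg, if_pos rfl, not_false_iff]
          rw [hfN, Ksymm]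
          exact hy
  have hne : S.Nonempty := by
    obtain ⟨m, hm⟩ := hex n
    refine ⟨m, 0, fun i => if i = 0 then n else m, by simp, by simp, ?_⟩
    intro i h1 h2
    have : i = 1 := by omega
    subst this
    simp only [show (1:ℕ) - 1 = 0 from rfl, if_pos rfl, if_neg one_ne_zero]
    rw [Ksymm]
    exact hm
  have := (isClopen_iff.mp ⟨hclosed, hopen⟩).resolve_left (by
    intro h; rw [h] at hne; exact Set.not_nonempty_empty hne)
  rw [this]
  trivial
end
end

section
/- Let K be a scattering kernel and let φ ∈ L^∞(S²) satisfy H[φ] = φ almost everywhere on S². Then φ is almost everywhere equal to a constant. -/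
open MeasureTheory Metric
open scoped Pointwise

local notation "⟪" x ", " y "⟫ℝ" => @inner ℝ _ _ x y

noncomputable section

/-! ### Vector algebra helpers -/

def toV (x : E3) : Fin 3 → ℝ := (WithLp.equiv 2 (Fin 3 → ℝ)) x

def cross3 (x y : E3) : E3 := (WithLp.equiv 2 (Fin 3 → ℝ)).symm (crossProduct (toV x) (toV y))

lemma inner_eq_dot (x y : E3) : ⟪x, y⟫ℝ = dotProduct (toV x) (toV y) := by
  simp [toV, PiLp.inner_apply, dotProduct, RCLike.inner_apply, mul_comm]

lemma toV_cross3 (x y : E3) : toV (cross3 x y) = crossProduct (toV x) (toV y) := rfl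

lemma norm_eq_one_of_sq {v : E3} (h : ‖v‖ ^ 2 = 1) : ‖v‖ = 1 := by
  nlinarith [norm_nonneg v]

lemma exists_unit_orth (m n : E3) : ∃ w : E3, ‖w‖ = 1 ∧ ⟪m, w⟫ℝ = 0 ∧ ⟪n, w⟫ℝ = 0 := by
  have hfr : Module.finrank ℝ E3 = 3 := finrank_euclideanSpace_fin
  set Kmn : Submodule ℝ E3 := Submodule.span ℝ {m, n} with hKmn
  have hle : Module.finrank ℝ Kmn ≤ 2 := by
    classical
    have h1 : Module.finrank ℝ Kmn ≤ ({m, n} : Set E3).toFinset.card := by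
      rw [hKmn]; exact finrank_span_le_card ({m, n} : Set E3)
    refine h1.trans ?_
    have : ({m, n} : Set E3).toFinset ⊆ {m, n} := by
      intro z hz
      simp only [Set.toFinset_insert, Set.toFinset_singleton] at hz
      exact hz
    calc ({m, n} : Set E3).toFinset.card ≤ ({m, n} : Finset E3).card := Finset.card_le_card this
      _ ≤ 2 := by
        refine (Finset.card_insert_le _ _).trans ?_
        simp
  have hne : Kmnᗮ ≠ ⊥ := by
    intro hbot
    have := Submodule.finrank_add_finrank_orthogonal (𝕜 := ℝ) Kmn
    rw [hbot, hfr] at this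
    simp [finrank_bot] at this
    omega
  obtain ⟨w0, hw0mem, hw0ne⟩ := Submodule.exists_mem_ne_zero_of_ne_bot hne
  have hw0norm : ‖w0‖ ≠ 0 := norm_ne_zero_iff.mpr hw0ne
  refine ⟨‖w0‖⁻¹ • w0, ?_, ?_, ?_⟩
  · rw [norm_smul]
    simp [abs_of_nonneg (inv_nonneg.mpr (norm_nonneg w0)), inv_mul_cancel₀ hw0norm]
  · rw [real_inner_smul_right]
    have : ⟪m, w0⟫ℝ = 0 :=
      (Submodule.mem_orthogonal Kmn w0).mp hw0mem m (Submodule.subset_span (by simp))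
    rw [this]; ring
  · rw [real_inner_smul_right]
    have : ⟪n, w0⟫ℝ = 0 :=
      (Submodule.mem_orthogonal Kmn w0).mp hw0mem n (Submodule.subset_span (by simp))
    rw [this]; ring

lemma geo (m n : E3) (hm : ‖m‖ = 1) (hn : ‖n‖ = 1) (t : ℝ)
    (h : 2 * t ^ 2 - 1 ≤ ⟪m, n⟫ℝ) :
    ∃ q : E3, ‖q‖ = 1 ∧ ⟪m, q⟫ℝ = t ∧ ⟪n, q⟫ℝ = t := by
  obtain ⟨w, hw1, hwm, hwn⟩ := exists_unit_orth m n
  set c : ℝ := ⟪m, n⟫ℝ with hc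
  have hcle : |c| ≤ 1 := by
    have := abs_real_inner_le_norm m n
    rwa [hm, hn, one_mul] at this
  have hcge : -1 ≤ c := (abs_le.mp hcle).1
  rcases eq_or_lt_of_le (show (0:ℝ) ≤ 1 + c by linarith) with h0 | h0
  · have ht : t = 0 := by nlinarith
    exact ⟨w, hw1, by rw [hwm, ht], by rw [hwn, ht]⟩
  · set α : ℝ := t / (1 + c) with hα
    have h2t : 2 * t ^ 2 ≤ 1 + c := by linarith
    set β : ℝ := Real.sqrt (1 - 2 * t ^ 2 / (1 + c)) with hβ
    have hβsq : β ^ 2 = 1 - 2 * t ^ 2 / (1 + c) := by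
      apply Real.sq_sqrt
      rw [sub_nonneg, div_le_one h0]
      exact h2t
    have hc0 : (1 + c) ≠ 0 := ne_of_gt h0
    refine ⟨(t / (1 + c)) • (m + n) + β • w, ?_, ?_, ?_⟩
    · apply norm_eq_one_of_sq
      have hcross : ⟪(t / (1 + c)) • (m + n), β • w⟫ℝ = 0 := by
        rw [real_inner_smul_left, real_inner_smul_right, inner_add_left, hwm, hwn]
        ring
      rw [norm_add_sq_real, hcross, norm_smul, norm_smul, mul_pow, mul_pow,
        norm_add_sq_real m n, hm, hn, ← hc, Real.norm_eq_abs, Real.norm_eq_abs,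
        sq_abs, sq_abs, hw1, hβsq, div_pow]
      field_simp [hc0]
      ring
    · rw [inner_add_right, real_inner_smul_right, real_inner_smul_right, inner_add_right,
        real_inner_self_eq_norm_sq, hm, hwm, ← hc]
      field_simp [hc0]; ring
    · rw [inner_add_right, real_inner_smul_right, real_inner_smul_right, inner_add_right,
        real_inner_self_eq_norm_sq, hn, hwn, real_inner_comm, ← hc]
      field_simp [hc0]
      ring

/-! ### Orthonormal frames and rotations -/

lemma cross3_facts (a x : E3) (ha : ‖a‖ = 1) (hx : ‖x‖ = 1) (hax : ⟪a, x⟫ℝ = 0) :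
    ⟪a, cross3 a x⟫ℝ = 0 ∧ ⟪x, cross3 a x⟫ℝ = 0 ∧ ⟪cross3 a x, cross3 a x⟫ℝ = 1 := by
  have haa : dotProduct (toV a) (toV a) = 1 := by
    rw [← inner_eq_dot, real_inner_self_eq_norm_sq, ha]; norm_num
  have hxx : dotProduct (toV x) (toV x) = 1 := by
    rw [← inner_eq_dot, real_inner_self_eq_norm_sq, hx]; norm_num
  have hax' : dotProduct (toV a) (toV x) = 0 := by rw [← inner_eq_dot]; exact hax
  have hxa' : dotProduct (toV x) (toV a) = 0 := by
    rw [← inner_eq_dot, real_inner_comm]; exact hax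
  refine ⟨?_, ?_, ?_⟩
  · rw [inner_eq_dot, toV_cross3]; exact dot_self_cross _ _
  · rw [inner_eq_dot, toV_cross3]; exact dot_cross_self _ _
  · rw [inner_eq_dot, toV_cross3, cross_dot_cross, haa, hxx, hax', hxa']; ring

lemma frame (a x : E3) (ha : ‖a‖ = 1) (hx : ‖x‖ = 1) (hax : ⟪a, x⟫ℝ = 0) :
    ∃ B : OrthonormalBasis (Fin 3) ℝ E3, B 0 = a ∧ B 1 = x ∧ B 2 = cross3 a x := by
  obtain ⟨h1, h2, h3⟩ := cross3_facts a x ha hx hax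
  set z := cross3 a x with hz
  have hon : Orthonormal ℝ ![a, x, z] := by
    rw [orthonormal_iff_ite]
    intro i j
    have haa : ⟪a, a⟫ℝ = 1 := by rw [real_inner_self_eq_norm_sq, ha]; norm_num
    have hxx : ⟪x, x⟫ℝ = 1 := by rw [real_inner_self_eq_norm_sq, hx]; norm_num
    have hxa : ⟪x, a⟫ℝ = 0 := by rw [real_inner_comm]; exact hax
    have h1' : ⟪z, a⟫ℝ = 0 := by rw [real_inner_comm]; exact h1
    have h2' : ⟪z, x⟫ℝ = 0 := by rw [real_inner_comm]; exact h2
    have hz1 : ‖z‖ = 1 := norm_eq_one_of_sq (by rw [← real_inner_self_eq_norm_sq]; exact h3)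
    fin_cases i <;> fin_cases j <;>
      simp [haa, hxx, hax, hxa, h1, h2, h3, h1', h2', ha, hx, hz1]
  have hsp : ⊤ ≤ Submodule.span ℝ (Set.range ![a, x, z]) := by
    rw [hon.linearIndependent.span_eq_top_of_card_eq_finrank (by simp [finrank_euclideanSpace_fin])]
  refine ⟨OrthonormalBasis.mk hon hsp, ?_, ?_, ?_⟩ <;>
    · rw [OrthonormalBasis.coe_mk]; simp

lemma det_frame (a x : E3) (ha : ‖a‖ = 1) (hx : ‖x‖ = 1) (hax : ⟪a, x⟫ℝ = 0) :
    (EuclideanSpace.basisFun (Fin 3) ℝ).toBasis.det ![a, x, cross3 a x] = 1 := by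
  obtain ⟨h1, h2, h3⟩ := cross3_facts a x ha hx hax
  rw [Module.Basis.det_apply]
  have hM : (EuclideanSpace.basisFun (Fin 3) ℝ).toBasis.toMatrix ![a, x, cross3 a x]
      = (Matrix.of ![toV a, toV x, toV (cross3 a x)]).transpose := by
    ext i j
    fin_cases j <;>
      simp [Module.Basis.toMatrix_apply, Matrix.transpose_apply, OrthonormalBasis.coe_toBasis_repr_apply,
        EuclideanSpace.basisFun_repr, toV]
  rw [hM, Matrix.det_transpose]
  have htr : Matrix.det (Matrix.of ![toV a, toV x, toV (cross3 a x)])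
      = dotProduct (toV a) (crossProduct (toV x) (toV (cross3 a x))) := by
    rw [triple_product_eq_det]; rfl
  rw [htr, triple_product_permutation, triple_product_permutation, ← toV_cross3,
    ← inner_eq_dot]
  exact h3

lemma exists_rotation (a b c d : E3) (ha : ‖a‖ = 1) (hb : ‖b‖ = 1) (hc : ‖c‖ = 1)
    (hd : ‖d‖ = 1) (habcd : ⟪a, b⟫ℝ = ⟪c, d⟫ℝ) :
    ∃ R : E3 ≃ₗᵢ[ℝ] E3, IsRotation R ∧ R a = c ∧ R b = d := by
  set t : ℝ := ⟪a, b⟫ℝ with htdef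
  have htle : t ^ 2 ≤ 1 := by
    have := abs_real_inner_le_norm a b
    rw [ha, hb, one_mul] at this
    nlinarith [abs_nonneg (⟪a, b⟫ℝ), sq_abs (⟪a, b⟫ℝ)]
  set s : ℝ := Real.sqrt (1 - t ^ 2) with hsdef
  have hs2 : s ^ 2 = 1 - t ^ 2 := Real.sq_sqrt (by linarith)
  obtain ⟨x, y, hx1, hy1, hax, hcy, hb2, hd2⟩ :
      ∃ x y : E3, ‖x‖ = 1 ∧ ‖y‖ = 1 ∧ ⟪a, x⟫ℝ = 0 ∧ ⟪c, y⟫ℝ = 0 ∧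
        b = t • a + s • x ∧ d = t • c + s • y := by
    have hnb : ‖b - t • a‖ ^ 2 = 1 - t ^ 2 := by
      rw [norm_sub_sq_real, norm_smul, real_inner_smul_right, real_inner_comm a b, ← htdef, hb,
        Real.norm_eq_abs, mul_pow, sq_abs, ha]
      ring
    have hnd : ‖d - t • c‖ ^ 2 = 1 - t ^ 2 := by
      rw [norm_sub_sq_real, norm_smul, real_inner_smul_right, real_inner_comm c d, ← habcd, hd,
        Real.norm_eq_abs, mul_pow, sq_abs, hc]
      ring
    rcases eq_or_lt_of_le htle with heq | hlt
    · -- degenerate case: b = t • a, d = t • c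
      have hs0 : s = 0 := by rw [hsdef]; rw [show 1 - t ^ 2 = 0 by linarith]; simp
      obtain ⟨x, hx1, hax, -⟩ := exists_unit_orth a a
      obtain ⟨y, hy1, hcy, -⟩ := exists_unit_orth c c
      have hb2 : b = t • a := by
        have : ‖b - t • a‖ ^ 2 = 0 := by rw [hnb]; linarith
        have := norm_eq_zero.mp (by nlinarith [norm_nonneg (b - t • a)] : ‖b - t • a‖ = 0)
        rw [sub_eq_zero] at this; exact this
      have hd2 : d = t • c := by
        have : ‖d - t • c‖ ^ 2 = 0 := by rw [hnd]; linarith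
        have := norm_eq_zero.mp (by nlinarith [norm_nonneg (d - t • c)] : ‖d - t • c‖ = 0)
        rw [sub_eq_zero] at this; exact this
      exact ⟨x, y, hx1, hy1, hax, hcy, by rw [hb2, hs0, zero_smul, add_zero],
        by rw [hd2, hs0, zero_smul, add_zero]⟩
    · have hspos : 0 < s := Real.sqrt_pos.mpr (by linarith)
      have hsne : s ≠ 0 := ne_of_gt hspos
      refine ⟨s⁻¹ • (b - t • a), s⁻¹ • (d - t • c), ?_, ?_, ?_, ?_, ?_, ?_⟩
      · apply norm_eq_one_of_sq
        rw [norm_smul, Real.norm_eq_abs, mul_pow, sq_abs, hnb, ← hs2]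
        field_simp
      · apply norm_eq_one_of_sq
        rw [norm_smul, Real.norm_eq_abs, mul_pow, sq_abs, hnd, ← hs2]
        field_simp
      · rw [real_inner_smul_right, inner_sub_right, real_inner_smul_right,
          real_inner_self_eq_norm_sq, ha, ← htdef]
        field_simp; ring
      · rw [real_inner_smul_right, inner_sub_right, real_inner_smul_right,
          real_inner_self_eq_norm_sq, hc, ← habcd]
        field_simp; ring
      · rw [smul_smul, mul_inv_cancel₀ hsne, one_smul]; abel
      · rw [smul_smul, mul_inv_cancel₀ hsne, one_smul]; abel
  obtain ⟨B1, hB10, hB11, hB12⟩ := frame a x ha hx1 hax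
  obtain ⟨B2, hB20, hB21, hB22⟩ := frame c y hc hy1 hcy
  have hmap : ∀ i : Fin 3, (B1.repr.trans B2.repr.symm) (B1 i) = B2 i := by
    intro i
    simp [LinearIsometryEquiv.trans_apply, OrthonormalBasis.repr_self,
      OrthonormalBasis.repr_symm_single]
  have hRa : (B1.repr.trans B2.repr.symm) a = c := by
    rw [← hB10, ← hB20]; exact hmap 0
  have hRx : (B1.repr.trans B2.repr.symm) x = y := by
    rw [← hB11, ← hB21]; exact hmap 1
  have hRz : (B1.repr.trans B2.repr.symm) (cross3 a x) = cross3 c y := by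
    rw [← hB12, ← hB22]; exact hmap 2
  refine ⟨B1.repr.trans B2.repr.symm, ?_, hRa, ?_⟩
  · -- determinant 1
    unfold IsRotation
    set f : E3 →ₗ[ℝ] E3 :=
      ((B1.repr.trans B2.repr.symm).toLinearEquiv : E3 →ₗ[ℝ] E3) with hfdef
    have hfeq : ⇑f ∘ ![a, x, cross3 a x] = ![c, y, cross3 c y] := by
      funext i
      fin_cases i
      · show f a = c; exact hRa
      · show f x = y; exact hRx
      · show f (cross3 a x) = cross3 c y; exact hRz
    have hdc := Module.Basis.det_comp (EuclideanSpace.basisFun (Fin 3) ℝ).toBasis f ![a, x, cross3 a x]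
    rw [hfeq, det_frame a x ha hx1 hax, det_frame c y hc hy1 hcy, mul_one] at hdc
    exact hdc.symm
  · rw [hb2, hd2, map_add, LinearIsometryEquiv.map_smul, LinearIsometryEquiv.map_smul, hRa, hRx]

/-! ### Measure facts -/

instance : IsFiniteMeasure μS :=
  inferInstanceAs (IsFiniteMeasure ((volume : Measure E3)).toSphere)

instance : Nonempty S2 :=
  ((NormedSpace.sphere_nonempty (x := (0:E3)) (r := 1)).mpr zero_le_one).to_subtype

instance : μS.IsOpenPosMeasure := by
  constructor
  intro U hU hUne
  rw [show μS = (volume : Measure E3).toSphere from rfl,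
    Measure.toSphere_apply' _ hU.measurableSet]
  obtain ⟨V, hV, hVU⟩ := isOpen_induced_iff.mp hU
  set A : Set E3 := {x : E3 | x ≠ 0 ∧ ‖x‖ < 1 ∧ ‖x‖⁻¹ • x ∈ V} with hA
  have hset : (Set.Ioo (0:ℝ) 1 • (Subtype.val '' U) : Set E3) = A := by
    ext z
    constructor
    · rintro ⟨r, hr, u, hu, rfl⟩
      obtain ⟨p, hp, rfl⟩ := hu
      have hpu : ‖(p:E3)‖ = 1 := mem_sphere_zero_iff_norm.mp p.2
      have hr0 : 0 < r := hr.1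
      have hpne : (p:E3) ≠ 0 := by
        intro h0; rw [h0] at hpu; simp at hpu
      have hnrm : ‖r • (p:E3)‖ = r := by
        rw [norm_smul, Real.norm_eq_abs, abs_of_pos hr0, hpu, mul_one]
      refine ⟨by simp [smul_eq_zero, ne_of_gt hr0, hpne], by rw [hnrm]; exact hr.2, ?_⟩
      rw [hnrm, smul_smul, inv_mul_cancel₀ (ne_of_gt hr0), one_smul]
      rw [← hVU] at hp
      exact hp
    · rintro ⟨hz0, hz1, hzV⟩
      have hzn : (0:ℝ) < ‖z‖ := norm_pos_iff.mpr hz0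
      refine ⟨‖z‖, ⟨hzn, hz1⟩, ‖z‖⁻¹ • z, ?_, ?_⟩
      · have hmem : ‖z‖⁻¹ • z ∈ Metric.sphere (0:E3) 1 := by
          rw [mem_sphere_zero_iff_norm, norm_smul, Real.norm_eq_abs,
            abs_of_pos (inv_pos.mpr hzn), inv_mul_cancel₀ (ne_of_gt hzn)]
        refine ⟨⟨‖z‖⁻¹ • z, hmem⟩, ?_, rfl⟩
        rw [← hVU]
        exact hzV
      · show ‖z‖ • (‖z‖⁻¹ • z) = z
        rw [smul_smul, mul_inv_cancel₀ (ne_of_gt hzn), one_smul]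
  rw [hset]
  have hopen : IsOpen A := by
    have h1 : IsOpen {x : E3 | x ≠ 0 ∧ ‖x‖ < 1} := by
      have : {x : E3 | x ≠ 0 ∧ ‖x‖ < 1} = {(0:E3)}ᶜ ∩ Metric.ball 0 1 := by
        ext x; simp [Metric.mem_ball, dist_zero_right]
      rw [this]
      exact isOpen_compl_singleton.inter Metric.isOpen_ball
    have hcont : ContinuousOn (fun x : E3 => ‖x‖⁻¹ • x) {x : E3 | x ≠ 0 ∧ ‖x‖ < 1} := by
      refine ContinuousOn.smul (f := fun x : E3 => ‖x‖⁻¹) (g := fun x => x) ?_ ?_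
      · exact (continuous_norm.continuousOn).inv₀ fun x hx => norm_ne_zero_iff.mpr hx.1
      · exact continuous_id.continuousOn
    have := hcont.isOpen_inter_preimage h1 hV
    have heq : {x : E3 | x ≠ 0 ∧ ‖x‖ < 1} ∩ (fun x : E3 => ‖x‖⁻¹ • x) ⁻¹' V = A := by
      ext x
      simp only [Set.mem_inter_iff, Set.mem_setOf_eq, Set.mem_preimage, hA]
      tauto
    rwa [heq] at this
  have hne : A.Nonempty := by
    obtain ⟨p, hp⟩ := hUne
    have hpu : ‖(p:E3)‖ = 1 := mem_sphere_zero_iff_norm.mp p.2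
    have hpne : (p:E3) ≠ 0 := by intro h0; rw [h0] at hpu; simp at hpu
    refine ⟨(1/2 : ℝ) • (p:E3), ?_, ?_, ?_⟩
    · simp [smul_eq_zero, hpne]
    · rw [norm_smul, hpu]; norm_num
    · have h12 : ‖(1/2 : ℝ) • (p:E3)‖ = 1/2 := by rw [norm_smul, hpu]; norm_num
      rw [h12, smul_smul, show ((1/2:ℝ))⁻¹ * (1/2) = 1 by norm_num, one_smul]
      rw [← hVU] at hp
      exact hp
  have hvol : volume A ≠ 0 := (hopen.measure_ne_zero volume hne)
  intro hcontra
  rw [mul_eq_zero] at hcontra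
  rcases hcontra with h | h
  · rw [finrank_euclideanSpace_fin] at h
    simp at h
  · exact hvol h

lemma μS_singleton (p : S2) : μS {p} = 0 := by
  rw [show μS = (volume : Measure E3).toSphere from rfl,
    Measure.toSphere_apply' _ (measurableSet_singleton p)]
  have hsub : (Set.Ioo (0:ℝ) 1 • (Subtype.val '' {p}) : Set E3)
      ⊆ (Submodule.span ℝ {(p:E3)} : Submodule ℝ E3) := by
    rintro z ⟨r, hr, u, hu, rfl⟩
    simp only [Set.image_singleton, Set.mem_singleton_iff] at hu
    subst hu
    exact Submodule.smul_mem _ r (Submodule.mem_span_singleton_self _)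
  have hne : (Submodule.span ℝ {(p:E3)} : Submodule ℝ E3) ≠ ⊤ := by
    intro htop
    have h1 : Module.finrank ℝ (Submodule.span ℝ ({(p:E3)} : Set E3)) ≤ 1 := by
      classical
      have h2 : Module.finrank ℝ (Submodule.span ℝ ({(p:E3)} : Set E3))
          ≤ ({(p:E3)} : Set E3).toFinset.card := finrank_span_le_card _
      simpa using h2
    rw [htop] at h1
    rw [finrank_top, finrank_euclideanSpace_fin] at h1
    omega
  have h0 : volume (Set.Ioo (0:ℝ) 1 • (Subtype.val '' {p}) : Set E3) = 0 :=
    measure_mono_null hsub (Measure.addHaar_submodule _ _ hne)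
  rw [h0, mul_zero]

lemma nrmS2 (z : S2) : ‖(z:E3)‖ = 1 := mem_sphere_zero_iff_norm.mp z.2

lemma K_inner (K : S2 → S2 → ℝ) (hK : IsScatteringKernel K) (m n m' n' : S2)
    (h : ⟪(m:E3), (n:E3)⟫ℝ = ⟪(m':E3), (n':E3)⟫ℝ) : K m n = K m' n' := by
  obtain ⟨R, hR, hRm, hRn⟩ := exists_rotation (m:E3) (n:E3) (m':E3) (n':E3)
    (nrmS2 m) (nrmS2 n) (nrmS2 m') (nrmS2 n') h
  have hinv := hK.rotation_invariant R hR m n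
  rw [show rotate R m = m' from Subtype.ext hRm,
    show rotate R n = n' from Subtype.ext hRn] at hinv
  exact hinv.symm


/-- If `φ ∈ L^∞(S²)` satisfies `H[φ] = φ` almost everywhere, where `H` is the scattering
operator of a scattering kernel `K`, then `φ` is almost everywhere equal to a constant. -/
theorem scattering_fixedPoint_ae_const (K : S2 → S2 → ℝ) (hK : IsScatteringKernel K)
    (φ : S2 → ℝ) (hφ : MemLp φ ⊤ μS)
    (hfix : (fun n => ∫ n' : S2, K n n' * φ n' ∂μS) =ᵐ[μS] φ) :
    ∃ c : ℝ, φ =ᵐ[μS] fun _ => c := by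
  classical
  obtain ⟨CK, hCK⟩ := isCompact_univ.exists_bound_of_continuousOn hK.continuous.continuousOn
  have hφi : Integrable φ μS := hφ.integrable le_top
  set F : S2 → ℝ := fun n => ∫ n' : S2, K n n' * φ n' ∂μS with hFdef
  have hKc1 : ∀ n : S2, Continuous fun n' => K n n' := fun n =>
    hK.continuous.comp (Continuous.prodMk_right n)
  have hKc2 : ∀ n' : S2, Continuous fun n => K n n' := fun n' =>
    hK.continuous.comp (continuous_id.prodMk continuous_const)
  have hFcont : Continuous F := by
    apply continuous_of_dominated (bound := fun n' => CK * ‖φ n'‖)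
    · exact fun n => ((hKc1 n).aestronglyMeasurable).mul hφ.1
    · intro n
      filter_upwards with n'
      rw [norm_mul]
      exact mul_le_mul_of_nonneg_right (hCK (n, n') trivial) (norm_nonneg _)
    · exact hφi.norm.const_mul CK
    · filter_upwards with n'
      exact (hKc2 n').mul continuous_const
  have hFφ : F =ᵐ[μS] φ := hfix
  have cont_int : ∀ {f : S2 → ℝ}, Continuous f → Integrable f μS := by
    intro f hf
    obtain ⟨C, hC⟩ := isCompact_univ.exists_bound_of_continuousOn hf.continuousOn
    exact (integrable_const C).mono' hf.aestronglyMeasurable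
      (Filter.Eventually.of_forall fun x => hC x trivial)
  have hFfix : ∀ n, ∫ n' : S2, K n n' * F n' ∂μS = F n := by
    intro n
    have he : (fun n' => K n n' * F n') =ᵐ[μS] fun n' => K n n' * φ n' :=
      hFφ.mono fun n' h => by dsimp only; rw [h]
    rw [integral_congr_ae he]
  have Ksymm : ∀ m n : S2, K m n = K n m := fun m n =>
    K_inner K hK m n n m (real_inner_comm _ _)
  have hrow : ∀ n : S2, ∫ n' : S2, K n n' ∂μS = 1 := by
    intro n
    have he : (fun n' : S2 => K n n') =ᵐ[μS] fun n' => K n' n :=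
      Filter.Eventually.of_forall fun n' => Ksymm n n'
    rw [integral_congr_ae he, hK.normalized n]
  obtain ⟨n0, -, hn0⟩ := isCompact_univ.exists_isMaxOn Set.univ_nonempty hFcont.continuousOn
  set M := F n0 with hMdef
  have hFle : ∀ n, F n ≤ M := fun n => hn0 (Set.mem_univ n)
  have hstep : ∀ m : S2, F m = M → ∀ n' : S2, 0 < K m n' → F n' = M := by
    intro m hm n' hpos
    have hGc : Continuous fun n'' : S2 => K m n'' * (M - F n'') :=
      (hKc1 m).mul (continuous_const.sub hFcont)
    have hint : Integrable (fun n'' : S2 => K m n'' * (M - F n'')) μS := cont_int hGc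
    have h1 : Integrable (fun n'' : S2 => K m n'' * M) μS :=
      cont_int ((hKc1 m).mul continuous_const)
    have h2 : Integrable (fun n'' : S2 => K m n'' * F n'') μS := cont_int ((hKc1 m).mul hFcont)
    have hzeroint : ∫ n'' : S2, K m n'' * (M - F n'') ∂μS = 0 := by
      have he : (fun n'' : S2 => K m n'' * (M - F n''))
          = fun n'' => K m n'' * M - K m n'' * F n'' := by
        funext n''; ring
      rw [he, integral_sub h1 h2, integral_mul_const, hrow m, hFfix m, hm, one_mul, sub_self]
    have hnn : 0 ≤ fun n'' : S2 => K m n'' * (M - F n'') :=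
      fun n'' => mul_nonneg (hK.nonneg m n'') (sub_nonneg.mpr (hFle n''))
    have hae := (integral_eq_zero_iff_of_nonneg hnn hint).mp hzeroint
    have hall := (Continuous.ae_eq_iff_eq μS hGc continuous_const).mp hae
    have hpt := congrFun hall n'
    rcases mul_eq_zero.mp hpt with h | h
    · exact absurd h (ne_of_gt hpos)
    · linarith
  -- existence of a non-degenerate positivity direction
  obtain ⟨p, hKp, hp1, hp2⟩ :
      ∃ p : S2, 0 < K n0 p ∧ (p:E3) ≠ (n0:E3) ∧ (p:E3) ≠ -(n0:E3) := by
    by_contra hno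
    push_neg at hno
    have hneg_mem : -(n0:E3) ∈ Metric.sphere (0:E3) 1 := by
      rw [mem_sphere_zero_iff_norm, norm_neg, nrmS2 n0]
    have hnull : μS ({n0} ∪ {(⟨-(n0:E3), hneg_mem⟩ : S2)}) = 0 :=
      measure_union_null (μS_singleton _) (μS_singleton _)
    have hae0 : (fun q : S2 => K n0 q) =ᵐ[μS] 0 := by
      rw [Filter.EventuallyEq, ae_iff]
      apply measure_mono_null _ hnull
      intro q hq
      simp only [Set.mem_setOf_eq, Pi.zero_apply] at hq
      have hpos : 0 < K n0 q := lt_of_le_of_ne (hK.nonneg n0 q) (Ne.symm hq)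
      by_cases hqe : (q:E3) = (n0:E3)
      · exact Or.inl (Subtype.ext hqe)
      · exact Or.inr (Subtype.ext (hno q hpos hqe))
    have hone := hrow n0
    rw [integral_congr_ae hae0] at hone
    simp at hone
  set t0 : ℝ := ⟪(n0:E3), (p:E3)⟫ℝ with ht0def
  have ht0lt : t0 < 1 := by
    have hdne : (p:E3) - (n0:E3) ≠ 0 := sub_ne_zero.mpr hp1
    have hd : (0:ℝ) < ‖(p:E3) - (n0:E3)‖ := norm_pos_iff.mpr hdne
    have hsq : ‖(p:E3) - (n0:E3)‖ ^ 2 = 2 - 2 * t0 := by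
      rw [norm_sub_sq_real, nrmS2 p, nrmS2 n0, real_inner_comm, ← ht0def]
      ring
    nlinarith
  have ht0gt : -1 < t0 := by
    have hdne : (p:E3) + (n0:E3) ≠ 0 := by
      intro h0
      exact hp2 (eq_neg_of_add_eq_zero_left h0)
    have hd : (0:ℝ) < ‖(p:E3) + (n0:E3)‖ := norm_pos_iff.mpr hdne
    have hsq : ‖(p:E3) + (n0:E3)‖ ^ 2 = 2 + 2 * t0 := by
      rw [norm_add_sq_real, nrmS2 p, nrmS2 n0, real_inner_comm, ← ht0def]
      ring
    nlinarith
  have hK_t0 : ∀ x y : S2, ⟪(x:E3), (y:E3)⟫ℝ = t0 → 0 < K x y := by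
    intro x y h
    rw [K_inner K hK x y n0 p (by rw [h, ht0def])]
    exact hKp
  set P : ℝ → Prop := fun s =>
    ∀ m : S2, F m = M → ∀ n : S2, s ≤ ⟪(m:E3), (n:E3)⟫ℝ → F n = M with hPdef
  have hstep1 : ∀ m : S2, F m = M → ∀ q : S2, ⟪(m:E3), (q:E3)⟫ℝ = t0 → F q = M :=
    fun m hm q hq => hstep m hm q (hK_t0 m q hq)
  have hP0 : P (2 * t0 ^ 2 - 1) := by
    intro m hm n hmn
    obtain ⟨q, hq1, hq2, hq3⟩ := geo (m:E3) (n:E3) (nrmS2 m) (nrmS2 n) t0 hmn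
    set q' : S2 := ⟨q, mem_sphere_zero_iff_norm.mpr hq1⟩ with hq'def
    have hFq : F q' = M := hstep1 m hm q' hq2
    exact hstep1 q' hFq n (by rw [real_inner_comm]; exact hq3)
  have hcomp : ∀ s : ℝ, 0 < s → P s → P (2 * s ^ 2 - 1) := by
    intro s hs hPs m hm n hmn
    have hcge : (0:ℝ) ≤ (1 + ⟪(m:E3), (n:E3)⟫ℝ) / 2 := by nlinarith
    set t : ℝ := Real.sqrt ((1 + ⟪(m:E3), (n:E3)⟫ℝ) / 2) with htdef
    have ht2 : t ^ 2 = (1 + ⟪(m:E3), (n:E3)⟫ℝ) / 2 := Real.sq_sqrt hcge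
    have hts : s ≤ t := by
      have h1 : s = Real.sqrt (s ^ 2) := (Real.sqrt_sq hs.le).symm
      rw [h1, htdef]
      exact Real.sqrt_le_sqrt (by nlinarith)
    obtain ⟨q, hq1, hq2, hq3⟩ := geo (m:E3) (n:E3) (nrmS2 m) (nrmS2 n) t (by rw [ht2]; linarith)
    set q' : S2 := ⟨q, mem_sphere_zero_iff_norm.mpr hq1⟩ with hq'def
    have hFq : F q' = M := hPs m hm q' (le_of_le_of_eq hts hq2.symm)
    refine hPs q' hFq n ?_
    have h4 : ⟪(q:E3), (n:E3)⟫ℝ = t := by rw [real_inner_comm]; exact hq3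
    exact le_of_le_of_eq hts h4.symm
  have hnegcase : ∀ s : ℝ, s ≤ 0 → P s → ∀ n : S2, F n = M := by
    intro s hs hPs n
    obtain ⟨w, hw1, hwm, hwn⟩ := exists_unit_orth (n0:E3) (n:E3)
    set w' : S2 := ⟨w, mem_sphere_zero_iff_norm.mpr hw1⟩ with hw'def
    have hFw : F w' = M := hPs n0 rfl w' (le_of_le_of_eq hs hwm.symm)
    refine hPs w' hFw n ?_
    have : ⟪(w:E3), (n:E3)⟫ℝ = 0 := by rw [real_inner_comm]; exact hwn
    rw [this]; exact hs
  set θ : ℝ := Real.arccos (2 * t0 ^ 2 - 1) with hθdef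
  have hb1 : -1 ≤ 2 * t0 ^ 2 - 1 := by nlinarith
  have hb2 : 2 * t0 ^ 2 - 1 ≤ 1 := by nlinarith
  have hb2' : 2 * t0 ^ 2 - 1 < 1 := by nlinarith
  have hθpos : 0 < θ := Real.arccos_pos.mpr hb2'
  have hcos0 : Real.cos θ = 2 * t0 ^ 2 - 1 := Real.cos_arccos hb1 hb2
  have claim : ∀ j : ℕ, (∃ s ≤ 0, P s) ∨ P (Real.cos ((2:ℝ) ^ j * θ)) := by
    intro j
    induction j with
    | zero =>
      right
      rw [pow_zero, one_mul, hcos0]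
      exact hP0
    | succ k ih =>
      rcases ih with h | h
      · exact Or.inl h
      · rcases le_or_gt (Real.cos ((2:ℝ) ^ k * θ)) 0 with hle | hlt
        · exact Or.inl ⟨_, hle, h⟩
        · right
          have he : (2:ℝ) ^ (k + 1) * θ = 2 * ((2:ℝ) ^ k * θ) := by ring
          rw [he, Real.cos_two_mul]
          exact hcomp _ hlt h
  obtain ⟨j, hj1, hj2⟩ : ∃ j : ℕ, Real.pi / 2 < (2:ℝ) ^ j * θ ∧ (2:ℝ) ^ j * θ ≤ Real.pi := by
    have hex : ∃ j : ℕ, Real.pi / 2 < (2:ℝ) ^ j * θ := by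
      obtain ⟨j, hj⟩ := pow_unbounded_of_one_lt (Real.pi / (2 * θ)) (one_lt_two (α := ℝ))
      refine ⟨j, ?_⟩
      calc Real.pi / 2 = (Real.pi / (2 * θ)) * θ := by field_simp
        _ < (2:ℝ) ^ j * θ := mul_lt_mul_of_pos_right hj hθpos
    let j := Nat.find hex
    have hj1 : Real.pi / 2 < (2:ℝ) ^ j * θ := Nat.find_spec hex
    refine ⟨j, hj1, ?_⟩
    rcases Nat.eq_zero_or_pos j with h0 | h0
    · rw [show j = 0 from h0, pow_zero, one_mul]
      exact Real.arccos_le_pi _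
    · have hk : ¬ Real.pi / 2 < (2:ℝ) ^ (j - 1) * θ := Nat.find_min hex (Nat.sub_lt h0 one_pos)
      push_neg at hk
      have hpow : (2:ℝ) ^ j = 2 * (2:ℝ) ^ (j - 1) := by
        rw [← pow_succ']
        congr 1
        omega
      rw [hpow]
      nlinarith [hk]
  have hcosle : Real.cos ((2:ℝ) ^ j * θ) ≤ 0 :=
    Real.cos_nonpos_of_pi_div_two_le_of_le hj1.le (by linarith [Real.pi_pos])
  have hall : ∀ n, F n = M := by
    rcases claim j with ⟨s, hs, hPs⟩ | h
    · exact hnegcase s hs hPs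
    · exact hnegcase _ hcosle h
  exact ⟨M, hFφ.symm.trans (Filter.Eventually.of_forall fun n => hall n)⟩
end
end

section
/- Let K be a scattering kernel. For ψ ∈ L^∞(S²), there exists φ ∈ L^∞(S²) with φ − H[φ] = ψ almost everywhere if and only if ∫_{S²} ψ(n) dn = 0. That is, the range of the operator Id − H on L^∞(S²) equals the set of bounded functions with zero mean over S². -/
open MeasureTheory Metric

noncomputable section

/-! ### Auxiliary material -/

section Aux

open Set Pointwise Function

lemma finrankE3 : Module.finrank ℝ E3 = 3 := finrank_euclideanSpace_fin

instance inst_s5 : PreconnectedSpace S2 :=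
  Subtype.preconnectedSpace (isPreconnected_sphere (E := E3) (by
    rw [← Module.finrank_eq_rank, finrankE3]; norm_num) 0 1)

instance inst_s5_2 : IsFiniteMeasure μS := by unfold μS; infer_instance

instance inst_s5_3 : Nonempty S2 :=
  ⟨⟨EuclideanSpace.single 0 1, by simp [mem_sphere_zero_iff_norm]⟩⟩

lemma μS_open_pos {s : Set S2} (hs : IsOpen s) (hne : s.Nonempty) : 0 < μS s := by
  rw [isOpen_induced_iff] at hs
  obtain ⟨W, hW, rfl⟩ := hs
  have hmeas : MeasurableSet ((Subtype.val ⁻¹' W : Set S2)) :=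
    (hW.preimage continuous_subtype_val).measurableSet
  rw [μS, Measure.toSphere_apply' _ hmeas]
  have himg : (Subtype.val '' (Subtype.val ⁻¹' W : Set S2)) = W ∩ sphere (0:E3) 1 := by
    rw [Set.image_preimage_eq_inter_range, Subtype.range_coe]
  obtain ⟨u, hu⟩ := hne
  set O : Set E3 := {x | (0 < ‖x‖ ∧ ‖x‖ < 1) ∧ ‖x‖⁻¹ • x ∈ W} with hO
  have hOopen : IsOpen O := by
    have h1 : IsOpen {x : E3 | 0 < ‖x‖ ∧ ‖x‖ < 1} :=
      (isOpen_lt continuous_const continuous_norm).inter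
        (isOpen_lt continuous_norm continuous_const)
    have h2 : ContinuousOn (fun x : E3 => ‖x‖⁻¹ • x) {x | 0 < ‖x‖ ∧ ‖x‖ < 1} := by
      apply ContinuousOn.fun_smul
      · exact ContinuousOn.inv₀ continuous_norm.continuousOn (fun x hx => ne_of_gt hx.1)
      · exact continuousOn_id
    exact h2.isOpen_inter_preimage h1 hW
  have hOsub : O ⊆ Ioo (0:ℝ) 1 • (Subtype.val '' (Subtype.val ⁻¹' W : Set S2)) := by
    intro x hx
    rw [himg]
    refine Set.mem_smul.2 ⟨‖x‖, ⟨hx.1.1, hx.1.2⟩, ‖x‖⁻¹ • x, ⟨hx.2, ?_⟩, ?_⟩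
    · simp [norm_smul, abs_of_nonneg (inv_nonneg.2 (norm_nonneg x)),
        inv_mul_cancel₀ (ne_of_gt hx.1.1)]
    · rw [smul_smul, mul_inv_cancel₀ (ne_of_gt hx.1.1), one_smul]
  have hOne : O.Nonempty := by
    have h1 : ‖(u:E3)‖ = 1 := mem_sphere_zero_iff_norm.mp u.2
    have h2 : ‖(1/2 : ℝ) • (u : E3)‖ = 1/2 := by
      rw [norm_smul, h1]; norm_num
    refine ⟨(1/2 : ℝ) • (u : E3), ⟨by rw [h2]; norm_num, by rw [h2]; norm_num⟩, ?_⟩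
    show ‖(1/2 : ℝ) • (u : E3)‖⁻¹ • ((1/2 : ℝ) • (u : E3)) ∈ W
    rw [h2, smul_smul]
    norm_num
    exact hu
  have hvol : 0 < volume O := hOopen.measure_pos volume hOne
  have hle := measure_mono hOsub (μ := volume)
  have h3 : (1:ENNReal) ≤ (Module.finrank ℝ E3 : ENNReal) := by
    rw [finrankE3]; norm_num
  calc (0:ENNReal) < volume O := hvol
  _ ≤ volume (Ioo (0:ℝ) 1 • (Subtype.val '' (Subtype.val ⁻¹' W : Set S2))) := hle
  _ = 1 * volume (Ioo (0:ℝ) 1 • (Subtype.val '' (Subtype.val ⁻¹' W : Set S2))) := (one_mul _).symm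
  _ ≤ _ := mul_le_mul_left h3 _

lemma μS_univ_pos : 0 < (μS Set.univ).toReal :=
  ENNReal.toReal_pos (μS_open_pos isOpen_univ Set.univ_nonempty).ne' (measure_ne_top _ _)

/-! #### Rotations swapping two given points -/

lemma det_refl_hyperplane {v : E3} (hv : v ≠ 0) :
    LinearMap.det ((Submodule.reflection (ℝ ∙ v)ᗮ).toLinearEquiv : E3 →ₗ[ℝ] E3) = -1 := by
  have := Submodule.det_reflection ((ℝ ∙ v)ᗮ)
  rw [Submodule.orthogonal_orthogonal, finrank_span_singleton hv] at this
  simpa using this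

lemma exists_swap_rotation (n n' : S2) (h : (n:E3) ≠ (n':E3)) :
    ∃ R : E3 ≃ₗᵢ[ℝ] E3, IsRotation R ∧ rotate R n = n' ∧ rotate R n' = n := by
  set d : E3 := (n:E3) - (n':E3) with hd
  have hdne : d ≠ 0 := sub_ne_zero.2 h
  obtain ⟨w, hw_mem, hwne⟩ : ∃ w : E3, w ∈ (Submodule.span ℝ {(n:E3), (n':E3)})ᗮ ∧ w ≠ 0 := by
    by_contra hcon
    push_neg at hcon
    have : (Submodule.span ℝ {(n:E3), (n':E3)})ᗮ = ⊥ := by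
      rw [Submodule.eq_bot_iff]; exact fun x hx => by_contra fun hne => hne (by
        have := hcon x hx; exact this)
    rw [Submodule.orthogonal_eq_bot_iff] at this
    have h1 : Module.finrank ℝ (Submodule.span ℝ ({(n:E3), (n':E3)} : Set E3)) ≤ 2 := by
      classical
      refine le_trans (finrank_span_le_card _) ?_
      rw [Set.toFinset_insert, Set.toFinset_singleton]
      exact le_trans (Finset.card_insert_le _ _) (by simp)
    rw [this] at h1
    rw [finrank_top, finrankE3] at h1
    norm_num at h1
  have hwn : (n:E3) ∈ (ℝ ∙ w)ᗮ := by
    rw [Submodule.mem_orthogonal_singleton_iff_inner_right]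
    rw [real_inner_comm]
    exact hw_mem (n:E3) (Submodule.subset_span (by simp))
  have hwn' : (n':E3) ∈ (ℝ ∙ w)ᗮ := by
    rw [Submodule.mem_orthogonal_singleton_iff_inner_right]
    rw [real_inner_comm]
    exact hw_mem (n':E3) (Submodule.subset_span (by simp))
  have hnorm : ‖(n:E3)‖ = ‖(n':E3)‖ := by
    rw [mem_sphere_zero_iff_norm.mp n.2, mem_sphere_zero_iff_norm.mp n'.2]
  have hSv : Submodule.reflection (ℝ ∙ d)ᗮ (n:E3) = (n':E3) := Submodule.reflection_sub hnorm
  have hSv' : Submodule.reflection (ℝ ∙ d)ᗮ (n':E3) = (n:E3) := by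
    have := congrArg (Submodule.reflection (ℝ ∙ d)ᗮ) hSv
    rw [Submodule.reflection_reflection] at this
    exact this.symm
  refine ⟨(Submodule.reflection (ℝ ∙ d)ᗮ).trans (Submodule.reflection (ℝ ∙ w)ᗮ), ?_, ?_, ?_⟩
  · unfold IsRotation
    have hco : ((((Submodule.reflection (ℝ ∙ d)ᗮ).trans (Submodule.reflection (ℝ ∙ w)ᗮ)).toLinearEquiv : E3 →ₗ[ℝ] E3))
        = ((Submodule.reflection (ℝ ∙ w)ᗮ).toLinearEquiv : E3 →ₗ[ℝ] E3) ∘ₗ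
          ((Submodule.reflection (ℝ ∙ d)ᗮ).toLinearEquiv : E3 →ₗ[ℝ] E3) := rfl
    rw [hco, LinearMap.det_comp, det_refl_hyperplane hdne, det_refl_hyperplane hwne]
    norm_num
  · apply Subtype.ext
    show Submodule.reflection (ℝ ∙ w)ᗮ (Submodule.reflection (ℝ ∙ d)ᗮ (n:E3)) = (n':E3)
    rw [hSv, Submodule.reflection_mem_subspace_eq_self hwn']
  · apply Subtype.ext
    show Submodule.reflection (ℝ ∙ w)ᗮ (Submodule.reflection (ℝ ∙ d)ᗮ (n':E3)) = (n:E3)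
    rw [hSv', Submodule.reflection_mem_subspace_eq_self hwn]

/-! #### Integration toolkit on `S²` -/

lemma cont_integrable {f : S2 → ℝ} (hf : Continuous f) : Integrable f μS :=
  hf.integrable_of_hasCompactSupport (HasCompactSupport.of_compactSpace f)

lemma bdd_integrable {f : S2 → ℝ} (hf : AEStronglyMeasurable f μS) {C : ℝ}
    (hb : ∀ x, |f x| ≤ C) : Integrable f μS :=
  ⟨hf, HasFiniteIntegral.of_bounded (C := C) (Filter.Eventually.of_forall (fun x => by
    simpa [Real.norm_eq_abs] using hb x))⟩

lemma cont_bdd2 {X : Type*} [TopologicalSpace X] [CompactSpace X] {f : X → ℝ}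
    (hf : Continuous f) : ∃ C, ∀ x, |f x| ≤ C := by
  obtain ⟨C, hC⟩ := isCompact_univ.exists_bound_of_continuousOn hf.continuousOn
  exact ⟨C, fun x => by simpa [Real.norm_eq_abs] using hC x trivial⟩

lemma cont_param_integral {X : Type*} [TopologicalSpace X] [FirstCountableTopology X]
    {F : X → S2 → ℝ} (hF : Continuous (Function.uncurry F))
    (hFb : ∃ C, ∀ z : X × S2, |Function.uncurry F z| ≤ C)
    {g : S2 → ℝ} (hg : AEStronglyMeasurable g μS) {C : ℝ} (hgb : ∀ p, |g p| ≤ C) :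
    Continuous (fun x => ∫ p, F x p * g p ∂μS) := by
  obtain ⟨B, hB⟩ := hFb
  rw [continuous_iff_continuousAt]
  intro x
  apply continuousAt_of_dominated (bound := fun p => B * |g p|)
  · exact Filter.Eventually.of_forall (fun x =>
      (((hF.comp (Continuous.prodMk_right x)).aestronglyMeasurable)).mul hg)
  · exact Filter.Eventually.of_forall (fun x => by
      filter_upwards [] with p
      rw [Real.norm_eq_abs, abs_mul]
      exact mul_le_mul_of_nonneg_right (hB (x, p)) (abs_nonneg _))
  · exact Integrable.const_mul (bdd_integrable hg.norm (fun p => by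
      simpa [abs_abs] using hgb p)) B
  · exact Filter.Eventually.of_forall (fun p =>
      ContinuousAt.mul ((hF.comp (continuous_id.prodMk continuous_const)).continuousAt)
        continuousAt_const)

lemma integ_mul {A : S2 → S2 → ℝ} (hA : Continuous (Function.uncurry A))
    {g : S2 → ℝ} (hg : AEStronglyMeasurable g μS) {C : ℝ} (hgb : ∀ p, |g p| ≤ C) (n : S2) :
    Integrable (fun p => A n p * g p) μS := by
  obtain ⟨B, hB⟩ := cont_bdd2 hA
  refine bdd_integrable (((hA.comp (Continuous.prodMk_right n)).aestronglyMeasurable).mul hg)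
    (C := B * C) (fun p => ?_)
  rw [abs_mul]
  exact mul_le_mul (hB (n, p)) (hgb p) (abs_nonneg _) ((abs_nonneg _).trans (hB (n, p)))

lemma swap_mul {A : S2 → S2 → ℝ} (hA : Continuous (Function.uncurry A))
    {g : S2 → ℝ} (hg : AEStronglyMeasurable g μS) {C : ℝ} (hgb : ∀ p, |g p| ≤ C) :
    ∫ n, ∫ p, A n p * g p ∂μS ∂μS = ∫ p, (∫ n, A n p ∂μS) * g p ∂μS := by
  obtain ⟨B, hB⟩ := cont_bdd2 hA
  have hint : Integrable (Function.uncurry (fun n p => A n p * g p)) (μS.prod μS) := by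
    constructor
    · exact hA.aestronglyMeasurable.mul (hg.comp_snd)
    · apply HasFiniteIntegral.of_bounded (C := B * C)
      refine Filter.Eventually.of_forall (fun z => ?_)
      rw [Function.uncurry, Real.norm_eq_abs, abs_mul]
      exact mul_le_mul (hB z) (hgb z.2) (abs_nonneg _) ((abs_nonneg _).trans (hB z))
  rw [integral_integral_swap hint]
  refine integral_congr_ae (Filter.Eventually.of_forall (fun p => ?_))
  exact integral_mul_const (g p) (fun n => A n p)

lemma swap_cont {A : S2 → S2 → ℝ} (hA : Continuous (Function.uncurry A)) :
    ∫ n, ∫ p, A n p ∂μS ∂μS = ∫ p, ∫ n, A n p ∂μS ∂μS := by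
  have := swap_mul hA (g := fun _ => (1:ℝ)) aestronglyMeasurable_const (C := 1)
    (fun p => by norm_num)
  simpa using this

lemma int_pos {f : S2 → ℝ} (hf : Continuous f) (h0 : ∀ p, 0 ≤ f p) {p₀ : S2}
    (hp : 0 < f p₀) : 0 < ∫ p, f p ∂μS := by
  set U := {x : S2 | f p₀ / 2 < f x} with hU
  have hUopen : IsOpen U := isOpen_lt continuous_const hf
  have hp₀U : p₀ ∈ U := by simp only [hU, Set.mem_setOf_eq]; linarith
  have hμU : 0 < μS U := μS_open_pos hUopen ⟨p₀, hp₀U⟩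
  have hint : Integrable f μS := cont_integrable hf
  have h1 : f p₀/2 * (μS U).toReal ≤ ∫ x in U, f x ∂μS :=
    setIntegral_ge_of_const_le_real hUopen.measurableSet (measure_ne_top μS U)
      (fun x hx => le_of_lt hx) hint.integrableOn
  have h2 : ∫ x in U, f x ∂μS ≤ ∫ x, f x ∂μS :=
    setIntegral_le_integral hint (Filter.Eventually.of_forall h0)
  have h3 : 0 < (μS U).toReal := ENNReal.toReal_pos hμU.ne' (measure_ne_top μS U)
  nlinarith

end Aux

/-! ### The kernel iterates -/

section Kernel

open Function

variable {K : S2 → S2 → ℝ}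

lemma Ksymm (hK : IsScatteringKernel K) (n n' : S2) : K n n' = K n' n := by
  by_cases h : (n:E3) = (n':E3)
  · rw [Subtype.ext h]
  · obtain ⟨R, hR, h1, h2⟩ := exists_swap_rotation n n' h
    have := hK.rotation_invariant R hR n' n
    rw [h1, h2] at this
    exact this

lemma Knorm' (hK : IsScatteringKernel K) (n : S2) : ∫ p, K n p ∂μS = 1 := by
  have : ∫ p, K n p ∂μS = ∫ p, K p n ∂μS :=
    integral_congr_ae (Filter.Eventually.of_forall (fun p => Ksymm hK n p))
  rw [this]
  exact hK.normalized n

/-- Iterated kernels: `Kpow K m` is the kernel of `H^(m+1)`. -/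
def Kpow (K : S2 → S2 → ℝ) : ℕ → S2 → S2 → ℝ
  | 0 => K
  | (m+1) => fun n n' => ∫ p, Kpow K m n p * K p n' ∂μS

lemma Kpow_cont (hK : IsScatteringKernel K) : ∀ m, Continuous (uncurry (Kpow K m))
  | 0 => hK.continuous
  | (m+1) => by
      have hprev := Kpow_cont hK m
      have hF : Continuous (uncurry (fun (z : S2 × S2) (p : S2) =>
          Kpow K m z.1 p * K p z.2)) := by
        apply Continuous.mul
        · exact hprev.comp ((continuous_fst.comp continuous_fst).prodMk continuous_snd)
        · exact hK.continuous.comp (continuous_snd.prodMk (continuous_snd.comp continuous_fst))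
      have := cont_param_integral hF (cont_bdd2 hF) aestronglyMeasurable_const
        (g := fun _ => (1:ℝ)) (C := 1) (fun p => by norm_num)
      simp only [mul_one] at this
      exact this

lemma Kpow_contL (hK : IsScatteringKernel K) (m : ℕ) (n : S2) :
    Continuous (fun p => Kpow K m n p) :=
  (Kpow_cont hK m).comp (continuous_const.prodMk continuous_id)

lemma Kpow_contR (hK : IsScatteringKernel K) (m : ℕ) (n' : S2) :
    Continuous (fun p => Kpow K m p n') :=
  (Kpow_cont hK m).comp (continuous_id.prodMk continuous_const)

lemma Kpow_nonneg (hK : IsScatteringKernel K) : ∀ m (n n' : S2), 0 ≤ Kpow K m n n'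
  | 0 => hK.nonneg
  | (m+1) => fun n n' => integral_nonneg (fun p =>
      mul_nonneg (Kpow_nonneg hK m n p) (hK.nonneg p n'))

/-- Chapman–Kolmogorov. -/
lemma chap (hK : IsScatteringKernel K) :
    ∀ b a (n n' : S2), Kpow K (a+b+1) n n' = ∫ p, Kpow K a n p * Kpow K b p n' ∂μS := by
  intro b
  induction b with
  | zero => intro a n n'; rfl
  | succ b IH =>
    intro a n n'
    have h1 : a + (b+1) + 1 = (a + b + 1) + 1 := by ring
    rw [h1]
    show ∫ q, Kpow K (a+b+1) n q * K q n' ∂μS = _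
    calc ∫ q, Kpow K (a+b+1) n q * K q n' ∂μS
        = ∫ q, ∫ p, Kpow K a n p * (Kpow K b p q * K q n') ∂μS ∂μS := by
          refine integral_congr_ae (Filter.Eventually.of_forall (fun q => ?_))
          dsimp only
          rw [IH a n q, ← integral_mul_const]
          refine integral_congr_ae (Filter.Eventually.of_forall (fun p => ?_))
          ring
      _ = ∫ p, ∫ q, Kpow K a n p * (Kpow K b p q * K q n') ∂μS ∂μS := by
          refine swap_cont (A := fun q p => Kpow K a n p * (Kpow K b p q * K q n')) ?_
          apply Continuous.mul
          · exact (Kpow_contL hK a n).comp continuous_snd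
          · apply Continuous.mul
            · exact (Kpow_cont hK b).comp (continuous_snd.prodMk continuous_fst)
            · exact (Kpow_contR hK 0 n').comp continuous_fst
      _ = ∫ p, Kpow K a n p * ∫ q, Kpow K b p q * K q n' ∂μS ∂μS := by
          refine integral_congr_ae (Filter.Eventually.of_forall (fun p => ?_))
          dsimp only
          rw [integral_const_mul]
      _ = ∫ p, Kpow K a n p * Kpow K (b+1) p n' ∂μS := rfl

lemma Kpow_symm (hK : IsScatteringKernel K) : ∀ m (n n' : S2), Kpow K m n n' = Kpow K m n' n
  | 0 => Ksymm hK
  | (m+1) => fun n n' => by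
      have h1 : ∫ p, Kpow K m n p * K p n' ∂μS = ∫ p, K n' p * Kpow K m p n ∂μS := by
        refine integral_congr_ae (Filter.Eventually.of_forall (fun p => ?_))
        dsimp only
        rw [Kpow_symm hK m n p, Ksymm hK p n']
        ring
      have h2 := chap hK m 0 n' n
      rw [Nat.zero_add] at h2
      show ∫ p, Kpow K m n p * K p n' ∂μS = Kpow K (m+1) n' n
      rw [h1, h2]
      rfl

lemma Kpow_sum_right (hK : IsScatteringKernel K) : ∀ m (n : S2), ∫ p, Kpow K m n p ∂μS = 1
  | 0 => Knorm' hK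
  | (m+1) => fun n => by
      show ∫ p, ∫ q, Kpow K m n q * K q p ∂μS ∂μS = 1
      rw [swap_cont (A := fun p q => Kpow K m n q * K q p) ?hc]
      case hc =>
        apply Continuous.mul
        · exact (Kpow_contL hK m n).comp continuous_snd
        · exact hK.continuous.comp (continuous_snd.prodMk continuous_fst)
      have h1 : ∀ q : S2, ∫ p, Kpow K m n q * K q p ∂μS = Kpow K m n q := by
        intro q
        rw [integral_const_mul, Knorm' hK q, mul_one]
      rw [integral_congr_ae (Filter.Eventually.of_forall h1)]
      exact Kpow_sum_right hK m n

lemma Kpow_sum_left (hK : IsScatteringKernel K) (m : ℕ) (n' : S2) :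
    ∫ n, Kpow K m n n' ∂μS = 1 := by
  have : ∫ n, Kpow K m n n' ∂μS = ∫ n, Kpow K m n' n ∂μS :=
    integral_congr_ae (Filter.Eventually.of_forall (fun n => Kpow_symm hK m n n'))
  rw [this, Kpow_sum_right hK m n']

/-! ### Doeblin minorization -/

lemma Kpow_one_diag_pos (hK : IsScatteringKernel K) (n : S2) : 0 < Kpow K 1 n n := by
  have hex : ∃ p, 0 < K n p := by
    by_contra h
    push_neg at h
    have hz : ∀ p, K n p = 0 := fun p => le_antisymm (h p) (hK.nonneg n p)
    have h1 := Knorm' hK n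
    rw [integral_congr_ae (Filter.Eventually.of_forall hz)] at h1
    simp at h1
  obtain ⟨p₀, hp₀⟩ := hex
  show 0 < ∫ p, K n p * K p n ∂μS
  have hc : Continuous (fun p => K n p * K p n) :=
    ((Kpow_contL hK 0 n).mul (Kpow_contR hK 0 n))
  refine int_pos hc (fun p => mul_nonneg (hK.nonneg n p) (hK.nonneg p n)) (p₀ := p₀) ?_
  have := Ksymm hK p₀ n
  nlinarith

lemma doeblin_step (hK : IsScatteringKernel K) {m : ℕ} {n q : S2} {p : S2}
    (h1 : 0 < Kpow K (2*m+1) n p) (h2 : 0 < Kpow K 1 p q) :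
    0 < Kpow K (2*(m+1)+1) n q := by
  have harith : 2*(m+1)+1 = (2*m+1) + 1 + 1 := by ring
  rw [harith, chap hK 1 (2*m+1) n q]
  have hc : Continuous (fun r => Kpow K (2*m+1) n r * Kpow K 1 r q) :=
    (Kpow_contL hK (2*m+1) n).mul (Kpow_contR hK 1 q)
  refine int_pos hc (fun r => mul_nonneg (Kpow_nonneg hK _ n r) (Kpow_nonneg hK _ r q))
    (p₀ := p) ?_
  exact mul_pos h1 h2

lemma doeblin_reach (hK : IsScatteringKernel K) (n n' : S2) :
    ∃ m, 0 < Kpow K (2*m+1) n n' := by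
  set W := {q : S2 | ∃ m, 0 < Kpow K (2*m+1) n q} with hW
  have hWopen : IsOpen W := by
    have : W = ⋃ m, {q : S2 | 0 < Kpow K (2*m+1) n q} := by
      ext q; simp [hW]
    rw [this]
    exact isOpen_iUnion (fun m => isOpen_lt continuous_const (Kpow_contL hK _ n))
  have hWne : W.Nonempty := by
    refine ⟨n, 0, ?_⟩
    have : 2*0+1 = 1 := by norm_num
    rw [this]
    exact Kpow_one_diag_pos hK n
  have hWclosed : IsClosed W := by
    rw [← closure_subset_iff_isClosed]
    intro q hq
    have hVopen : IsOpen {p : S2 | 0 < Kpow K 1 p q} :=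
      isOpen_lt continuous_const (Kpow_contR hK 1 q)
    have hqV : q ∈ {p : S2 | 0 < Kpow K 1 p q} := Kpow_one_diag_pos hK q
    obtain ⟨p, hpV, hpW⟩ := mem_closure_iff.1 hq _ hVopen hqV
    obtain ⟨m, hm⟩ := hpW
    exact ⟨m+1, doeblin_step hK hm hpV⟩
  have : W = Set.univ := IsClopen.eq_univ ⟨hWclosed, hWopen⟩ hWne
  have : n' ∈ W := this ▸ Set.mem_univ n'
  exact this

lemma doeblin_mono (hK : IsScatteringKernel K) {m : ℕ} {n n' : S2}
    (h : 0 < Kpow K (2*m+1) n n') : ∀ m', m ≤ m' → 0 < Kpow K (2*m'+1) n n' := by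
  intro m' hm'
  induction m' , hm' using Nat.le_induction with
  | base => exact h
  | succ m' hmm IH => exact doeblin_step hK IH (Kpow_one_diag_pos hK n')

lemma doeblin (hK : IsScatteringKernel K) :
    ∃ M ε, 0 < ε ∧ ∀ n n' : S2, ε ≤ Kpow K M n n' := by
  have hcover : (Set.univ : Set (S2 × S2)) ⊆
      ⋃ m : ℕ, {z : S2 × S2 | 0 < Kpow K (2*m+1) z.1 z.2} := by
    intro z _
    obtain ⟨m, hm⟩ := doeblin_reach hK z.1 z.2
    exact Set.mem_iUnion.2 ⟨m, hm⟩
  obtain ⟨t, ht⟩ := isCompact_univ.elim_finite_subcover _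
    (fun m : ℕ => isOpen_lt continuous_const (Kpow_cont hK (2*m+1))) hcover
  set N := t.sup id with hN
  have hall : ∀ z : S2 × S2, 0 < Kpow K (2*N+1) z.1 z.2 := by
    intro z
    obtain ⟨m, hmt, hm⟩ := Set.mem_iUnion₂.1 (ht (Set.mem_univ z))
    exact doeblin_mono hK hm N (Finset.le_sup (f := id) hmt)
  obtain ⟨z₀, -, hz₀⟩ := isCompact_univ.exists_isMinOn Set.univ_nonempty
    (Kpow_cont hK (2*N+1)).continuousOn
  exact ⟨2*N+1, Kpow K (2*N+1) z₀.1 z₀.2, hall z₀,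
    fun n n' => hz₀ (Set.mem_univ (n, n'))⟩

/-! ### The scattering operator and its iterates -/

/-- The scattering operator. -/
def Hop (K : S2 → S2 → ℝ) (f : S2 → ℝ) (n : S2) : ℝ := ∫ p, K n p * f p ∂μS

/-- The operator with kernel `Kpow K m`, i.e. `H^(m+1)`. -/
def Gop (K : S2 → S2 → ℝ) (m : ℕ) (f : S2 → ℝ) (n : S2) : ℝ :=
  ∫ p, Kpow K m n p * f p ∂μS

lemma Gop_zero (f : S2 → ℝ) : Gop K 0 f = Hop K f := rfl

lemma Gop_cont (hK : IsScatteringKernel K) (m : ℕ) {f : S2 → ℝ}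
    (hf : AEStronglyMeasurable f μS) {C : ℝ} (hfb : ∀ p, |f p| ≤ C) :
    Continuous (Gop K m f) :=
  cont_param_integral (Kpow_cont hK m) (cont_bdd2 (Kpow_cont hK m)) hf hfb

lemma Gop_bound (hK : IsScatteringKernel K) (m : ℕ) {f : S2 → ℝ}
    (hf : AEStronglyMeasurable f μS) {C : ℝ} (hfb : ∀ p, |f p| ≤ C) (n : S2) :
    |Gop K m f n| ≤ C := by
  have h1 : |Gop K m f n| ≤ ∫ p, |Kpow K m n p * f p| ∂μS := by
    have := norm_integral_le_integral_norm (μ := μS) (fun p => Kpow K m n p * f p)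
    simp only [Real.norm_eq_abs] at this
    exact this
  have h2 : ∫ p, |Kpow K m n p * f p| ∂μS ≤ ∫ p, Kpow K m n p * C ∂μS := by
    refine integral_mono ((integ_mul (Kpow_cont hK m) hf hfb n).abs) ?_ (fun p => ?_)
    · exact (cont_integrable ((Kpow_contL hK m n).mul continuous_const))
    · rw [abs_mul, abs_of_nonneg (Kpow_nonneg hK m n p)]
      exact mul_le_mul_of_nonneg_left (hfb p) (Kpow_nonneg hK m n p)
  have h3 : ∫ p, Kpow K m n p * C ∂μS = C := by
    rw [integral_mul_const, Kpow_sum_right hK m n, one_mul]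
  linarith

lemma Gop_mean (hK : IsScatteringKernel K) (m : ℕ) {f : S2 → ℝ}
    (hf : AEStronglyMeasurable f μS) {C : ℝ} (hfb : ∀ p, |f p| ≤ C) :
    ∫ n, Gop K m f n ∂μS = ∫ p, f p ∂μS := by
  show ∫ n, ∫ p, Kpow K m n p * f p ∂μS ∂μS = _
  rw [swap_mul (Kpow_cont hK m) hf hfb]
  refine integral_congr_ae (Filter.Eventually.of_forall (fun p => ?_))
  dsimp only
  rw [Kpow_sum_left hK m p, one_mul]

lemma Hop_Gop (hK : IsScatteringKernel K) (m : ℕ) {f : S2 → ℝ}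
    (hf : AEStronglyMeasurable f μS) {C : ℝ} (hfb : ∀ p, |f p| ≤ C) :
    Hop K (Gop K m f) = Gop K (m+1) f := by
  funext n
  have hGb := fun p => Gop_bound hK m hf hfb p
  show ∫ p, K n p * Gop K m f p ∂μS = _
  have h1 : ∀ p, K n p * Gop K m f p = ∫ q, (K n p * Kpow K m p q) * f q ∂μS := by
    intro p
    show K n p * ∫ q, Kpow K m p q * f q ∂μS = _
    rw [← integral_const_mul]
    refine integral_congr_ae (Filter.Eventually.of_forall (fun q => ?_))
    dsimp only
    ring
  rw [integral_congr_ae (Filter.Eventually.of_forall h1)]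
  have hA : Continuous (Function.uncurry (fun (p q : S2) => K n p * Kpow K m p q)) := by
    apply Continuous.mul
    · exact (Kpow_contL hK 0 n).comp continuous_fst
    · exact Kpow_cont hK m
  rw [swap_mul hA hf hfb]
  refine integral_congr_ae (Filter.Eventually.of_forall (fun q => ?_))
  dsimp only
  have h2 := chap hK m 0 n q
  rw [Nat.zero_add] at h2
  have h2' : Kpow K (m+1) n q = ∫ p, K n p * Kpow K m p q ∂μS := h2
  rw [← h2']

lemma Hop_iterate (hK : IsScatteringKernel K) {f : S2 → ℝ} (hf : Continuous f) :
    ∀ m, (Hop K)^[m+1] f = Gop K m f := by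
  obtain ⟨C, hC⟩ := cont_bdd2 hf
  intro m
  induction m with
  | zero => rw [Function.iterate_one, Gop_zero]
  | succ m IH =>
    rw [Function.iterate_succ_apply', IH]
    exact Hop_Gop hK m hf.aestronglyMeasurable hC

/-! ### The spectral-gap contraction -/

lemma contraction (hK : IsScatteringKernel K) {M : ℕ} {ε : ℝ} (hε : 0 < ε)
    (hdoeb : ∀ n n' : S2, ε ≤ Kpow K M n n') {f : S2 → ℝ}
    (hf : AEStronglyMeasurable f μS) {C : ℝ} (hC : 0 ≤ C) (hfb : ∀ p, |f p| ≤ C)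
    (hmean : ∫ p, f p ∂μS = 0) (n : S2) :
    |Gop K M f n| ≤ (1 - ε * (μS Set.univ).toReal) * C := by
  set A := (μS Set.univ).toReal with hA
  have hfint : Integrable f μS := bdd_integrable hf hfb
  have hint1 : Integrable (fun p => Kpow K M n p * f p) μS :=
    integ_mul (Kpow_cont hK M) hf hfb n
  have heq : Gop K M f n = ∫ p, (Kpow K M n p - ε) * f p ∂μS := by
    have : ∀ p, (Kpow K M n p - ε) * f p = Kpow K M n p * f p - ε * f p := by
      intro p; ring
    rw [integral_congr_ae (Filter.Eventually.of_forall this), integral_sub hint1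
      (hfint.const_mul ε), integral_const_mul, hmean, mul_zero, sub_zero]
    rfl
  have h1 : |Gop K M f n| ≤ ∫ p, |(Kpow K M n p - ε) * f p| ∂μS := by
    rw [heq]
    have := norm_integral_le_integral_norm (μ := μS) (fun p => (Kpow K M n p - ε) * f p)
    simp only [Real.norm_eq_abs] at this
    exact this
  have h2 : ∫ p, |(Kpow K M n p - ε) * f p| ∂μS ≤ ∫ p, (Kpow K M n p - ε) * C ∂μS := by
    refine integral_mono ?_ ?_ (fun p => ?_)
    · refine Integrable.abs ?_
      have : (fun p => (Kpow K M n p - ε) * f p)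
          = fun p => Kpow K M n p * f p - ε * f p := by
        funext p; ring
      rw [this]
      exact hint1.sub (hfint.const_mul ε)
    · exact cont_integrable (((Kpow_contL hK M n).sub continuous_const).mul continuous_const)
    · rw [abs_mul, abs_of_nonneg (by linarith [hdoeb n p] : (0:ℝ) ≤ Kpow K M n p - ε)]
      exact mul_le_mul_of_nonneg_left (hfb p) (by linarith [hdoeb n p])
  have h3 : ∫ p, (Kpow K M n p - ε) * C ∂μS = (1 - ε * A) * C := by
    rw [integral_mul_const, integral_sub (cont_integrable (Kpow_contL hK M n))
      (integrable_const ε), Kpow_sum_right hK M n, integral_const]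
    simp only [smul_eq_mul, hA, Measure.real]
    ring
  linarith

/-! ### Summability of the Neumann series bound -/

lemma summable_pow_div {ρ : ℝ} (hρ0 : 0 ≤ ρ) (hρ1 : ρ < 1) {q : ℕ} (hq : 0 < q) :
    Summable (fun k : ℕ => ρ ^ (k / q)) := by
  rcases eq_or_lt_of_le hρ0 with h0 | h0
  · refine summable_of_ne_finset_zero (s := Finset.range q) (fun k hk => ?_)
    rw [Finset.mem_range, not_lt] at hk
    rw [← h0]
    exact zero_pow (Nat.div_pos hk hq).ne'
  · set r := ρ ^ ((1:ℝ)/(q:ℝ)) with hr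
    have hr0 : 0 ≤ r := Real.rpow_nonneg hρ0 _
    have hr1 : r < 1 := Real.rpow_lt_one hρ0 hρ1 (by positivity)
    refine Summable.of_nonneg_of_le (fun k => pow_nonneg hρ0 _) (fun k => ?_)
      ((summable_geometric_of_lt_one hr0 hr1).mul_left ρ⁻¹)
    have hqR : (0:ℝ) < (q:ℝ) := by exact_mod_cast hq
    have hk1 : ((k : ℝ)/(q:ℝ)) - 1 ≤ ((k/q : ℕ) : ℝ) := by
      have h2 : k < (k/q + 1) * q := (Nat.div_lt_iff_lt_mul hq).1 (Nat.lt_succ_self _)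
      have h3 : (k:ℝ) < ((k/q : ℕ) + 1) * q := by exact_mod_cast h2
      rw [div_sub_one hqR.ne', div_le_iff₀ hqR]
      nlinarith
    calc ρ ^ (k/q) = ρ ^ (((k/q : ℕ) : ℝ)) := (Real.rpow_natCast ρ _).symm
      _ ≤ ρ ^ ((k:ℝ)/(q:ℝ) - 1) := Real.rpow_le_rpow_of_exponent_ge h0 hρ1.le hk1
      _ = ρ⁻¹ * r ^ k := by
          rw [Real.rpow_sub h0, Real.rpow_one, ← Real.rpow_natCast r k, hr,
            ← Real.rpow_mul hρ0]
          rw [div_eq_inv_mul]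
          congr 1
          field_simp

/-! ### The Neumann series and solution of `(Id - H) φ = ψ` -/

lemma Hop_add (hK : IsScatteringKernel K) {f g : S2 → ℝ}
    (hf : AEStronglyMeasurable f μS) {C : ℝ} (hfb : ∀ p, |f p| ≤ C)
    (hg : AEStronglyMeasurable g μS) {D : ℝ} (hgb : ∀ p, |g p| ≤ D) (n : S2) :
    Hop K (fun p => f p + g p) n = Hop K f n + Hop K g n := by
  show ∫ p, K n p * (f p + g p) ∂μS = _
  have : ∀ p, K n p * (f p + g p) = K n p * f p + K n p * g p := fun p => by ring
  rw [integral_congr_ae (Filter.Eventually.of_forall this),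
    integral_add (integ_mul hK.continuous hf hfb n) (integ_mul hK.continuous hg hgb n)]
  rfl

/-- Solution of `(Id - H)φ = ψ` for bounded measurable `ψ` of zero mean. -/
lemma exists_solution (hK : IsScatteringKernel K) {ψ : S2 → ℝ}
    (hm : AEStronglyMeasurable ψ μS) {C : ℝ} (hC : 0 ≤ C) (hb : ∀ x, |ψ x| ≤ C)
    (h0 : ∫ x, ψ x ∂μS = 0) :
    ∃ φ : S2 → ℝ, MemLp φ ⊤ μS ∧ ∀ n, φ n - Hop K φ n = ψ n := by
  obtain ⟨M, ε, hε, hdoeb⟩ := doeblin hK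
  set A := (μS Set.univ).toReal with hA
  have hApos : 0 < A := μS_univ_pos
  set ρ := 1 - ε * A with hρ
  have hρ1 : ρ < 1 := by
    have : 0 < ε * A := mul_pos hε hApos
    rw [hρ]; linarith
  have hρ0 : 0 ≤ ρ := by
    obtain ⟨n₀⟩ := (inferInstance : Nonempty S2)
    have h1 : ∫ p, Kpow K M n₀ p ∂μS = 1 := Kpow_sum_right hK M n₀
    have h2 : ∫ p, (fun _ : S2 => ε) p ∂μS ≤ ∫ p, Kpow K M n₀ p ∂μS := by
      refine integral_mono (integrable_const ε) (cont_integrable (Kpow_contL hK M n₀))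
        (fun p => hdoeb n₀ p)
    rw [integral_const, h1] at h2
    simp only [smul_eq_mul, Measure.real] at h2
    rw [hρ, hA]
    nlinarith
  set w := Hop K ψ with hw
  have hwcont : Continuous w := by
    rw [hw]
    exact cont_param_integral hK.continuous (cont_bdd2 hK.continuous) hm hb
  have hwb : ∀ n, |w n| ≤ C := fun n => Gop_bound hK 0 hm hb n
  have hwmean : ∫ n, w n ∂μS = 0 := by
    rw [hw, ← Gop_zero]
    rw [Gop_mean hK 0 hm hb, h0]
  set q := M + 1 with hq
  -- basic properties of the iterates
  have P : ∀ k, Continuous ((Hop K)^[k] w) ∧ (∫ n, (Hop K)^[k] w n ∂μS = 0) ∧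
      ∀ n, |(Hop K)^[k] w n| ≤ C := by
    intro k
    induction k with
    | zero => exact ⟨hwcont, hwmean, hwb⟩
    | succ k IH =>
      obtain ⟨hc, hmean, hbd⟩ := IH
      rw [Function.iterate_succ_apply', ← Gop_zero]
      exact ⟨Gop_cont hK 0 hc.aestronglyMeasurable hbd,
        by rw [Gop_mean hK 0 hc.aestronglyMeasurable hbd]; exact hmean,
        fun n => Gop_bound hK 0 hc.aestronglyMeasurable hbd n⟩
  -- geometric decay
  have decay : ∀ k, ∀ n, |(Hop K)^[k] w n| ≤ C * ρ ^ (k / q) := by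
    intro k
    induction k using Nat.strong_induction_on with
    | _ k IH =>
      by_cases hk : k < q
      · rw [Nat.div_eq_of_lt hk, pow_zero, mul_one]
        exact (P k).2.2
      · push_neg at hk
        have hkq : q ≤ k := hk
        have hqpos : 0 < q := Nat.succ_pos M
        have hsplit : (Hop K)^[k] w = (Hop K)^[q] ((Hop K)^[k - q] w) := by
          rw [← Function.iterate_add_apply, Nat.add_sub_cancel' hkq]
        obtain ⟨hgc, hgmean, -⟩ := P (k - q)
        have hgb : ∀ n, |(Hop K)^[k-q] w n| ≤ C * ρ ^ ((k-q) / q) :=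
          IH (k - q) (by omega)
        have hCq : 0 ≤ C * ρ ^ ((k-q) / q) := mul_nonneg hC (pow_nonneg hρ0 _)
        intro n
        have hGop : (Hop K)^[q] ((Hop K)^[k - q] w) = Gop K M ((Hop K)^[k - q] w) :=
          Hop_iterate hK hgc M
        rw [hsplit, hGop]
        have hcon := contraction hK hε hdoeb hgc.aestronglyMeasurable hCq hgb hgmean n
        have harith : (k - q) / q + 1 = k / q := by
          rw [← Nat.add_div_right _ hqpos, Nat.sub_add_cancel hkq]
        calc |Gop K M ((Hop K)^[k-q] w) n| ≤ (1 - ε * A) * (C * ρ ^ ((k-q)/q)) := hcon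
          _ = C * ρ ^ ((k-q)/q + 1) := by rw [← hρ]; ring
          _ = C * ρ ^ (k/q) := by rw [harith]
  -- the Neumann series in C(S², ℝ)
  set u : ℕ → C(S2, ℝ) := fun k => ⟨(Hop K)^[k] w, (P k).1⟩ with hu
  have hsum : Summable u := by
    refine Summable.of_norm_bounded
      ((summable_pow_div hρ0 hρ1 (Nat.succ_pos M)).mul_left C) (fun k => ?_)
    refine (ContinuousMap.norm_le _ (mul_nonneg hC (pow_nonneg hρ0 _))).2 (fun n => ?_)
    simpa [Real.norm_eq_abs, hu] using decay k n
  set h : C(S2, ℝ) := ∑' k, u k with hh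
  -- the operator as a continuous linear map on C(S², ℝ)
  have hTbound : ∀ f : C(S2, ℝ), ∀ n, |Hop K (⇑f) n| ≤ ‖f‖ := by
    intro f n
    exact Gop_bound hK 0 f.continuous.aestronglyMeasurable
      (fun p => by simpa [Real.norm_eq_abs] using f.norm_coe_le_norm p) n
  set TcL : C(S2, ℝ) →L[ℝ] C(S2, ℝ) := LinearMap.mkContinuous
    { toFun := fun f => ⟨Hop K (⇑f), Gop_cont hK 0 f.continuous.aestronglyMeasurable
        (C := ‖f‖) (fun p => by simpa [Real.norm_eq_abs] using f.norm_coe_le_norm p)⟩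
      map_add' := by
        intro f g
        ext n
        show Hop K (⇑(f + g)) n = Hop K (⇑f) n + Hop K (⇑g) n
        have : ⇑(f+g) = fun p => f p + g p := rfl
        rw [this]
        exact Hop_add hK f.continuous.aestronglyMeasurable
          (fun p => by simpa [Real.norm_eq_abs] using f.norm_coe_le_norm p)
          g.continuous.aestronglyMeasurable
          (fun p => by simpa [Real.norm_eq_abs] using g.norm_coe_le_norm p) n
      map_smul' := by
        intro c f
        ext n
        show Hop K (⇑(c • f)) n = c * Hop K (⇑f) n
        show ∫ p, K n p * (c • f) p ∂μS = c * ∫ p, K n p * f p ∂μS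
        rw [← integral_const_mul]
        refine integral_congr_ae (Filter.Eventually.of_forall (fun p => ?_))
        show K n p * (c * f p) = c * (K n p * f p)
        ring } 1
    (fun f => by
      rw [one_mul]
      refine (ContinuousMap.norm_le _ (norm_nonneg f)).2 (fun n => ?_)
      exact (Real.norm_eq_abs _).trans_le (hTbound f n))
  have hTapp : ∀ f : C(S2, ℝ), ⇑(TcL f) = Hop K (⇑f) := fun f => rfl
  have hTu : ∀ k, TcL (u k) = u (k + 1) := by
    intro k
    ext n
    show Hop K ((Hop K)^[k] w) n = (Hop K)^[k+1] w n
    rw [Function.iterate_succ_apply']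
  have hTh : TcL h = h - u 0 := by
    rw [hh, TcL.map_tsum hsum]
    have h1 : ∑' k, TcL (u k) = ∑' k, u (k + 1) := by
      refine tsum_congr (fun k => hTu k)
    rw [h1]
    have h2 := Summable.tsum_eq_zero_add hsum
    rw [h2]
    ring
  have hHoph : ∀ n, Hop K (⇑h) n = h n - w n := by
    intro n
    have := congrArg (fun f : C(S2,ℝ) => f n) hTh
    simp [hTapp] at this; exact this
  -- final assembly
  refine ⟨fun n => ψ n + h n, ?_, ?_⟩
  · obtain ⟨D, hD⟩ := cont_bdd2 h.continuous
    refine memLp_top_of_bound (hm.add h.continuous.aestronglyMeasurable) (C + D)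
      (Filter.Eventually.of_forall (fun n => ?_))
    rw [Real.norm_eq_abs]
    calc |ψ n + h n| ≤ |ψ n| + |h n| := abs_add_le _ _
      _ ≤ C + D := add_le_add (hb n) (hD n)
  · intro n
    have hHφ : Hop K (fun p => ψ p + h p) n = w n + (h n - w n) := by
      obtain ⟨D, hD⟩ := cont_bdd2 h.continuous
      rw [Hop_add hK hm hb h.continuous.aestronglyMeasurable hD n, hHoph n]
    rw [hHφ]
    ring

/-! ### Bounded representative of an `L^∞` function -/

lemma exists_bdd_repr {f : S2 → ℝ} (hf : MemLp f ⊤ μS) :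
    ∃ (g : S2 → ℝ) (C : ℝ), AEStronglyMeasurable g μS ∧ 0 ≤ C ∧ (∀ x, |g x| ≤ C) ∧
      f =ᵐ[μS] g := by
  obtain ⟨hmeas, hnorm⟩ := hf
  rw [eLpNorm_exponent_top] at hnorm
  set S := (eLpNormEssSup f μS).toReal with hS
  set C := max S 0 with hC
  have hC0 : 0 ≤ C := le_max_right _ _
  set g0 := hmeas.mk f with hg0
  have hfg0 : f =ᵐ[μS] g0 := hmeas.ae_eq_mk
  set g : S2 → ℝ := fun x => max (min (g0 x) C) (-C) with hg
  have hgm : AEStronglyMeasurable g μS := by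
    have hm0 : Measurable g0 := hmeas.stronglyMeasurable_mk.measurable
    exact ((hm0.min measurable_const).max measurable_const).aestronglyMeasurable
  refine ⟨g, C, hgm, hC0, fun x => ?_, ?_⟩
  · rw [abs_le]
    constructor
    · exact le_max_right _ _
    · exact max_le (min_le_right _ _) (by linarith)
  · have hbd : ∀ᵐ x ∂μS, ‖f x‖₊ ≤ eLpNormEssSup f μS := ae_le_eLpNormEssSup
    filter_upwards [hfg0, hbd] with x h1 h2
    have h3 : |f x| ≤ S := by
      rw [hS]
      have := ENNReal.toReal_mono hnorm.ne h2
      simpa [Real.norm_eq_abs] using this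
    have h4 : |g0 x| ≤ C := by rw [← h1]; exact le_trans h3 (le_max_left _ _)
    rw [hg]
    rw [abs_le] at h4
    simp only []
    rw [min_eq_left h4.2, max_eq_left h4.1, h1]

end Kernel

/-- The range of `Id − H` on `L^∞(S²)`, where `H` is the scattering operator of a scattering
kernel `K`: for `ψ ∈ L^∞(S²)` there exists `φ ∈ L^∞(S²)` with `φ − H[φ] = ψ` almost
everywhere if and only if `∫_{S²} ψ(n) dn = 0`. -/
theorem range_id_sub_scattering (K : S2 → S2 → ℝ) (hK : IsScatteringKernel K)
    (ψ : S2 → ℝ) (hψ : MemLp ψ ⊤ μS) :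
    (∃ φ : S2 → ℝ, MemLp φ ⊤ μS ∧
        (fun n => φ n - ∫ n' : S2, K n n' * φ n' ∂μS) =ᵐ[μS] ψ) ↔
      ∫ n : S2, ψ n ∂μS = 0 := by
  constructor
  · rintro ⟨φ, hφmem, hae⟩
    obtain ⟨φ', C, hφ'm, hC0, hφ'b, hφφ'⟩ := exists_bdd_repr hφmem
    have hHopeq : ∀ n, Hop K φ n = Hop K φ' n := by
      intro n
      refine integral_congr_ae ?_
      filter_upwards [hφφ'] with p hp
      rw [hp]
    have hψ' : ψ =ᵐ[μS] fun n => φ' n - Hop K φ' n := by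
      refine hae.symm.trans ?_
      filter_upwards [hφφ'] with n hn
      show φ n - ∫ p, K n p * φ p ∂μS = φ' n - Hop K φ' n
      rw [← hHopeq n, hn]
      rfl
    rw [integral_congr_ae hψ']
    have hint1 : Integrable φ' μS := bdd_integrable hφ'm hφ'b
    have hcont : Continuous (Hop K φ') :=
      cont_param_integral hK.continuous (cont_bdd2 hK.continuous) hφ'm hφ'b
    rw [integral_sub hint1 (cont_integrable hcont)]
    have hmean := Gop_mean hK 0 hφ'm hφ'b
    rw [Gop_zero] at hmean
    rw [hmean, sub_self]
  · intro hzero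
    obtain ⟨ψ', C, hψ'm, hC0, hψ'b, hψψ'⟩ := exists_bdd_repr hψ
    have h0' : ∫ x, ψ' x ∂μS = 0 := by
      rw [← integral_congr_ae hψψ', hzero]
    obtain ⟨φ, hmem, heq⟩ := exists_solution hK hψ'm hC0 hψ'b h0'
    refine ⟨φ, hmem, ?_⟩
    filter_upwards [hψψ'] with n hn
    show φ n - ∫ n', K n n' * φ n' ∂μS = ψ n
    rw [hn]
    exact heq n
end
end

section
/- Let K : ℝ → ℝ be continuous, 2π-periodic, non-negative, and satisfy ∫_0^{2π} K(θ) dθ = 1. If f ∈ L^∞ is a 2π-periodic function satisfying the convolution equation ∫_0^{2π} K(θ − φ) f(φ) dφ = f(θ) for almost every θ, then f is almost everywhere equal to a constant. -/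
open MeasureTheory Real

noncomputable section

/-- A continuous nonnegative function on `[0, 2π]` with zero integral vanishes on `(0, 2π]`. -/
lemma aux_zero_of_integral_zero {h : ℝ → ℝ} (hc : Continuous h) (hnn : ∀ x, 0 ≤ h x)
    (hint : ∫ x in (0:ℝ)..(2*π), h x = 0) : ∀ y ∈ Set.Ioc (0:ℝ) (2*π), h y = 0 := by
  have h2π : (0:ℝ) ≤ 2*π := by positivity
  have hae : h =ᵐ[(volume : Measure ℝ).restrict (Set.Ioc (0:ℝ) (2*π))] 0 := by
    rw [← intervalIntegral.integral_eq_zero_iff_of_le_of_nonneg_ae h2π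
      (Filter.Eventually.of_forall fun x => hnn x) (hc.intervalIntegrable _ _)]
    exact hint
  intro y hy
  by_contra hne
  have hopen : IsOpen {x : ℝ | h x ≠ 0} := isOpen_compl_singleton.preimage hc
  obtain ⟨ε, hε, hball⟩ := Metric.isOpen_iff.1 hopen y hne
  set a := max 0 (y - ε/2) with ha
  have hay : a < y := max_lt hy.1 (by linarith)
  have hsub : Set.Ioc a y ⊆ {x : ℝ | h x ≠ 0} ∩ Set.Ioc (0:ℝ) (2*π) := by
    intro z hz
    have hz1 : a < z := hz.1
    have hz2 : z ≤ y := hz.2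
    constructor
    · apply hball
      rw [Metric.mem_ball, Real.dist_eq, abs_lt]
      have : y - ε/2 ≤ a := le_max_right _ _
      constructor <;> linarith
    · have : (0:ℝ) ≤ a := le_max_left _ _
      exact ⟨lt_of_le_of_lt this hz1, hz2.trans hy.2⟩
  have hmz : volume ({x : ℝ | h x ≠ 0} ∩ Set.Ioc (0:ℝ) (2*π)) = 0 := by
    rw [Filter.EventuallyEq, ae_iff] at hae
    simp only [Pi.zero_apply] at hae
    rw [Measure.restrict_apply hopen.measurableSet] at hae
    exact hae
  have hvol : volume (Set.Ioc a y) = 0 :=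
    le_antisymm (le_trans (measure_mono hsub) hmz.le) zero_le
  rw [Real.volume_Ioc] at hvol
  have hpos : (0:ENNReal) < ENNReal.ofReal (y - a) := by
    rw [ENNReal.ofReal_pos]; linarith
  exact absurd hvol hpos.ne'

/-- If `K : ℝ → ℝ` is continuous, `2π`-periodic, non-negative with `∫_0^{2π} K = 1`, and
`f ∈ L^∞` is a `2π`-periodic function satisfying the convolution equation
`∫_0^{2π} K(θ − φ) f(φ) dφ = f(θ)` for almost every `θ`, then `f` is almost everywhere equal
to a constant. -/
theorem convolution_fixedPoint_ae_const (K : ℝ → ℝ) (hcont : Continuous K)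
    (hper : Function.Periodic K (2 * π)) (hnonneg : ∀ θ, 0 ≤ K θ)
    (hnorm : ∫ θ in (0 : ℝ)..(2 * π), K θ = 1)
    (f : ℝ → ℝ) (hf : MemLp f ⊤ (volume : Measure ℝ))
    (hfper : Function.Periodic f (2 * π))
    (hfix : ∀ᵐ θ ∂(volume : Measure ℝ), ∫ φ in (0 : ℝ)..(2 * π), K (θ - φ) * f φ = f θ) :
    ∃ c : ℝ, f =ᵐ[volume] fun _ => c := by
  have h2π : (0:ℝ) < 2 * π := by positivity
  set g : ℝ → ℝ := fun θ' => ∫ φ in (0 : ℝ)..(2 * π), K (θ' - φ) * f φ with hg_def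
  have hfg : f =ᵐ[volume] g := hfix.mono fun θ h => h.symm
  -- measurability and bounds
  have hfm : AEStronglyMeasurable f volume := hf.aestronglyMeasurable
  obtain ⟨Cf, hCf0, hCf⟩ : ∃ C, 0 ≤ C ∧ ∀ᵐ φ ∂(volume : Measure ℝ), |f φ| ≤ C := by
    refine ⟨(eLpNormEssSup f volume).toReal, ENNReal.toReal_nonneg, ?_⟩
    have hfin : eLpNormEssSup f volume ≠ ⊤ := by
      have := hf.2; rw [eLpNorm_exponent_top] at this; exact this.ne
    filter_upwards [ae_le_eLpNormEssSup (f := f) (μ := (volume : Measure ℝ))] with x hx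
    have := ENNReal.toReal_mono hfin hx
    simpa [Real.norm_eq_abs] using this
  obtain ⟨CK, hCK⟩ : ∃ C, ∀ x, |K x| ≤ C := by
    obtain ⟨C, hC⟩ := (isCompact_Icc (a := (0:ℝ)) (b := 2*π)).exists_bound_of_continuousOn
      hcont.continuousOn
    refine ⟨C, fun x => ?_⟩
    obtain ⟨y, hy, hxy⟩ := hper.exists_mem_Ico₀ h2π x
    rw [hxy]
    simpa [Real.norm_eq_abs] using hC y (Set.mem_Icc_of_Ico hy)
  -- continuity of g
  have hgc : Continuous g := by
    rw [continuous_iff_continuousAt]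
    intro θ
    have key : Filter.Tendsto (fun θ' => ∫ φ in (0:ℝ)..(2*π), K (θ' - φ) * f φ) (nhds θ)
        (nhds (∫ φ in (0:ℝ)..(2*π), K (θ - φ) * f φ)) := by
      apply intervalIntegral.tendsto_integral_filter_of_dominated_convergence
        (bound := fun _ => CK * Cf)
      · exact Filter.Eventually.of_forall fun θ' =>
          (((hcont.comp (continuous_const.sub continuous_id)).aestronglyMeasurable).mul
            hfm).restrict
      · filter_upwards with θ'
        filter_upwards [hCf] with φ hφ
        intro _
        rw [Real.norm_eq_abs, abs_mul]
        exact mul_le_mul (hCK _) hφ (abs_nonneg _) ((abs_nonneg _).trans (hCK 0))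
      · exact intervalIntegrable_const
      · filter_upwards with φ _
        exact ((hcont.comp (continuous_id.sub continuous_const)).continuousAt.tendsto).mul
          tendsto_const_nhds
    exact key
  -- g is periodic
  have hgper : Function.Periodic g (2*π) := by
    intro θ
    simp only [hg_def]
    apply intervalIntegral.integral_congr
    intro φ _
    dsimp only
    have e : θ + 2*π - φ = (θ - φ) + 2*π := by ring
    rw [e, hper (θ - φ)]
  -- normalized kernel
  have hknorm : ∀ θ, ∫ φ in (0:ℝ)..(2*π), K (θ - φ) = 1 := by
    intro θ
    have h1 := hper.intervalIntegral_add_eq (θ - 2*π) 0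
    rw [sub_add_cancel, zero_add] at h1
    rw [intervalIntegral.integral_comp_sub_left K θ, sub_zero, h1, hnorm]
  -- fixed point equation for g
  have hg_eq : ∀ θ, g θ = ∫ φ in (0:ℝ)..(2*π), K (θ - φ) * g φ := by
    intro θ
    simp only [hg_def]
    exact intervalIntegral.integral_congr_ae (hfg.mono fun φ h _ => by rw [h])
  -- maximum of g
  obtain ⟨θ0, hθ0mem, hθ0max⟩ := (isCompact_Icc (a := (0:ℝ)) (b := 2*π)).exists_isMaxOn
    (Set.nonempty_Icc.2 h2π.le) hgc.continuousOn
  set M := g θ0 with hM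
  have hle : ∀ θ, g θ ≤ M := by
    intro θ
    obtain ⟨y, hy, hxy⟩ := hgper.exists_mem_Ico₀ h2π θ
    rw [hxy]
    exact hθ0max (Set.mem_Icc_of_Ico hy)
  -- propagation step
  have hstep : ∀ θ, g θ = M → ∀ t, 0 < K t → g (θ - t) = M := by
    intro θ hθ t ht
    set h : ℝ → ℝ := fun φ => K (θ - φ) * (M - g φ) with hh
    have hhc : Continuous h :=
      (hcont.comp (continuous_const.sub continuous_id)).mul (continuous_const.sub hgc)
    have hhnn : ∀ x, 0 ≤ h x := fun x => mul_nonneg (hnonneg _) (sub_nonneg.2 (hle x))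
    have cK : Continuous fun x : ℝ => K (θ - x) :=
      hcont.comp (continuous_const.sub continuous_id)
    have hint : ∫ x in (0:ℝ)..(2*π), h x = 0 := by
      have c1 : Continuous fun x : ℝ => M * K (θ - x) := continuous_const.mul cK
      have c2 : Continuous fun x : ℝ => K (θ - x) * g x := cK.mul hgc
      have e1 : ∫ x in (0:ℝ)..(2*π), h x
          = (∫ x in (0:ℝ)..(2*π), M * K (θ - x)) - ∫ x in (0:ℝ)..(2*π), K (θ - x) * g x := by
        rw [← intervalIntegral.integral_sub (c1.intervalIntegrable _ _)
          (c2.intervalIntegrable _ _)]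
        apply intervalIntegral.integral_congr
        intro x _
        simp only [hh]
        ring
      rw [e1, intervalIntegral.integral_const_mul, hknorm θ, ← hg_eq θ, hθ, mul_one, sub_self]
    have hzero := aux_zero_of_integral_zero hhc hhnn hint
    have hhper : Function.Periodic h (2*π) := by
      intro x
      simp only [hh]
      have e : θ - (x + 2*π) = (θ - x) - 2*π := by ring
      rw [e, hper.sub_eq, hgper x]
    have hy := toIocMod_mem_Ioc h2π 0 (θ - t)
    rw [zero_add] at hy
    have hy2 : h (toIocMod h2π 0 (θ - t)) = h (θ - t) := by
      have e := self_sub_toIocMod h2π 0 (θ - t)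
      have e2 : toIocMod h2π 0 (θ - t) = (θ - t) - (toIocDiv h2π 0 (θ - t) : ℝ) * (2*π) := by
        rw [← zsmul_eq_mul, ← e]; ring
      rw [e2, hhper.sub_int_mul_eq]
    have h0 : h (θ - t) = 0 := by rw [← hy2]; exact hzero _ hy
    have : K t * (M - g (θ - t)) = 0 := by
      have e : θ - (θ - t) = t := by ring
      simpa only [hh, e] using h0
    rcases mul_eq_zero.1 this with h' | h'
    · exact absurd h' ht.ne'
    · linarith [sub_eq_zero.1 h']
  -- a point of positivity of K
  obtain ⟨t0, ht0⟩ : ∃ t, 0 < K t := by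
    by_contra hcon
    push_neg at hcon
    have hK0 : K = fun _ => (0:ℝ) := funext fun t => le_antisymm (hcon t) (hnonneg t)
    rw [hK0] at hnorm
    simp at hnorm
  obtain ⟨δ, hδ, hKδ⟩ : ∃ δ > 0, ∀ t, |t - t0| < δ → 0 < K t := by
    obtain ⟨δ, hδpos, hd⟩ := Metric.continuousAt_iff.1 (hcont.continuousAt (x := t0)) (K t0) ht0
    refine ⟨δ, hδpos, fun t htb => ?_⟩
    have := hd (show dist t t0 < δ by rwa [Real.dist_eq])
    rw [Real.dist_eq] at this
    have := (abs_lt.1 this).1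
    linarith
  -- induction: g = M on larger and larger intervals
  have hind : ∀ n : ℕ, ∀ s : ℝ, |s| < ((n:ℝ)+1) * δ → g (θ0 - ((n:ℝ)+1) * t0 + s) = M := by
    intro n
    induction n with
    | zero =>
      intro s hs
      have hs' : |s| < δ := by push_cast at hs; linarith
      have hK : 0 < K (t0 - s) := hKδ _ (by rw [show t0 - s - t0 = -s by ring, abs_neg]; exact hs')
      have := hstep θ0 rfl (t0 - s) hK
      have e : θ0 - (t0 - s) = θ0 - (((0:ℕ):ℝ)+1) * t0 + s := by push_cast; ring
      rwa [e] at this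
    | succ n ih =>
      intro s hs
      push_cast at hs ⊢
      set N := (n:ℝ) with hN
      have hN0 : 0 ≤ N := Nat.cast_nonneg n
      set s1 := s * ((N+1) / (N+2)) with hs1
      set s2 := s * (1 / (N+2)) with hs2
      have hN2 : (0:ℝ) < N + 2 := by linarith
      have hsum : s1 + s2 = s := by
        rw [hs1, hs2]
        field_simp
        ring
      have h1 : |s1| < (N+1) * δ := by
        rw [hs1, abs_mul, abs_of_nonneg (by positivity : (0:ℝ) ≤ (N+1)/(N+2)),
          ← mul_div_assoc, div_lt_iff₀ hN2]
        have habs : 0 ≤ |s| := abs_nonneg s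
        nlinarith [mul_lt_mul_of_pos_right hs (show (0:ℝ) < N+1 by linarith)]
      have h2 : |s2| < δ := by
        rw [hs2, abs_mul, abs_of_nonneg (by positivity : (0:ℝ) ≤ 1/(N+2)),
          mul_one_div, div_lt_iff₀ hN2]
        linarith
      have hprev := ih s1 h1
      have hK : 0 < K (t0 - s2) :=
        hKδ _ (by rw [show t0 - s2 - t0 = -s2 by ring, abs_neg]; exact h2)
      have := hstep _ hprev (t0 - s2) hK
      have e : θ0 - (N+1) * t0 + s1 - (t0 - s2) = θ0 - (N+1+1) * t0 + s := by
        rw [← hsum]; ring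
      rwa [e] at this
  -- conclusion: g is constant
  have hall : ∀ θ, g θ = M := by
    intro θ
    obtain ⟨n, hn⟩ := exists_nat_gt (π / δ)
    have hnδ : π < ((n:ℝ)+1) * δ := by
      have h1 : π < (n:ℝ) * δ := (div_lt_iff₀ hδ).1 hn
      nlinarith
    set c := θ0 - ((n:ℝ)+1) * t0 with hc
    set u := (θ - c) / (2*π) with hu
    set k := round u with hk
    set s := θ - (k:ℝ) * (2*π) - c with hs
    have hsabs : |s| ≤ π := by
      have e : s = (u - (k:ℝ)) * (2*π) := by
        rw [hs, hu]
        field_simp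
        ring
      rw [e, abs_mul, abs_of_pos h2π]
      have := abs_sub_round u
      nlinarith [this]
    have := hind n s (lt_of_le_of_lt hsabs hnδ)
    have e : θ0 - ((n:ℝ)+1) * t0 + s = θ - (k:ℝ) * (2*π) := by rw [hs, hc]; ring
    rw [e, hgper.sub_int_mul_eq k] at this
    exact this
  exact ⟨M, hfg.trans (Filter.Eventually.of_forall hall)⟩
end
end
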